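/- arXiv:2011.04903 — 12 statements merged into one kernel-verified Lean document; each statement's English description precedes it below -/
import Mathlib

section
/- Let d = d1*d2 with 2 ≤ d1 ≤ d2, and let S = {ψ_1, ..., ψ_N} ⊆ C^d be an absolutely entangled set with respect to the bipartition (d1, d2). Then for every i ∈ {1,...,N}, the complex linear span of S \ {ψ_i} has dimension at least d2 + 1. -/
noncomputable section

def ProdVec (d1 d2 : ℕ) (ψ : EuclideanSpace ℂ (Fin d1 × Fin d2)) : Prop :=
  ∃ (u : Fin d1 → ℂ) (v : Fin d2 → ℂ), ∀ p : Fin d1 × Fin d2, ψ p = u p.1 * v p.2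

/-- A family of states is absolutely entangled w.r.t. `(d1,d2)` if every unitary image of it
contains at least one non-product vector. -/
def AbsolutelyEntangled (d1 d2 N : ℕ) (ψ : Fin N → EuclideanSpace ℂ (Fin d1 × Fin d2)) : Prop :=
  ∀ U : EuclideanSpace ℂ (Fin d1 × Fin d2) ≃ₗᵢ[ℂ] EuclideanSpace ℂ (Fin d1 × Fin d2),
    ∃ i : Fin N, ¬ ProdVec d1 d2 (U (ψ i))

set_option maxHeartbeats 2000000 in
theorem stmt1 (d1 d2 N : ℕ) (hd1 : 2 ≤ d1) (hd12 : d1 ≤ d2)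
    (ψ : Fin N → EuclideanSpace ℂ (Fin d1 × Fin d2))
    (hne : ∀ i, ψ i ≠ 0)
    (habs : AbsolutelyEntangled d1 d2 N ψ) :
    ∀ i : Fin N,
      d2 + 1 ≤ Module.finrank ℂ (Submodule.span ℂ (ψ '' {j : Fin N | j ≠ i})) := by
  classical
  intro i
  by_contra hlt
  push_neg at hlt
  have hd2 : 2 ≤ d2 := le_trans hd1 hd12
  set W : Submodule ℂ (EuclideanSpace ℂ (Fin d1 × Fin d2)) := Submodule.span ℂ (ψ '' {j : Fin N | j ≠ i}) with hWdef
  set k := Module.finrank ℂ W with hkdef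
  have hk : k ≤ d2 := by omega
  have hdim : Module.finrank ℂ (EuclideanSpace ℂ (Fin d1 × Fin d2)) = d1 * d2 := by
    rw [finrank_euclideanSpace]; simp
  -- orthogonal decomposition of ψ i
  set w : EuclideanSpace ℂ (Fin d1 × Fin d2) := ((W.orthogonalProjectionOnto (ψ i) : W) : EuclideanSpace ℂ (Fin d1 × Fin d2)) with hwdef
  have hwW : w ∈ W := (W.orthogonalProjectionOnto (ψ i)).2
  set z : EuclideanSpace ℂ (Fin d1 × Fin d2) := ψ i - w with hzdef
  have hzW : z ∈ Wᗮ := W.sub_starProjection_mem_orthogonal (ψ i)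
  -- orthonormal basis of W whose first vector is the normalization of w (when w ≠ 0)
  obtain ⟨bW, hbW⟩ : ∃ bW : OrthonormalBasis (Fin k) ℂ W,
      w ≠ 0 → ∃ h0 : 0 < k, ((bW ⟨0, h0⟩ : W) : EuclideanSpace ℂ (Fin d1 × Fin d2)) = (‖w‖ : ℂ)⁻¹ • w := by
    by_cases hw : w = 0
    · exact ⟨stdOrthonormalBasis ℂ W, fun h => absurd hw h⟩
    · have hwW' : (⟨w, hwW⟩ : W) ≠ 0 := by
        simpa [Submodule.mk_eq_zero] using hw
      have h0 : 0 < k := by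
        rw [hkdef]
        exact Module.finrank_pos_iff.2 ⟨⟨⟨w, hwW⟩, 0, hwW'⟩⟩
      have hnw : ‖w‖ ≠ 0 := norm_ne_zero_iff.2 hw
      set wh : W := ⟨(‖w‖ : ℂ)⁻¹ • w, W.smul_mem _ hwW⟩ with hwh
      have hnormwh : ‖wh‖ = 1 := by
        have : ‖(wh : EuclideanSpace ℂ (Fin d1 × Fin d2))‖ = 1 := by
          rw [hwh]
          simp only [norm_smul, norm_inv, Complex.norm_real, norm_norm]
          field_simp
        simpa using this
      have horth : Orthonormal ℂ (({⟨0, h0⟩} : Set (Fin k)).restrict fun _ => wh) := by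
        constructor
        · intro _; exact hnormwh
        · intro a b hab
          exact absurd (Subtype.ext ((Set.mem_singleton_iff.1 a.2).trans
            (Set.mem_singleton_iff.1 b.2).symm)) hab
      obtain ⟨bW, hbWs⟩ := horth.exists_orthonormalBasis_extension_of_card_eq
        (by simp [hkdef]) 
      refine ⟨bW, fun _ => ⟨h0, ?_⟩⟩
      rw [hbWs _ (Set.mem_singleton _)]
  -- normalized version of z (or an arbitrary unit vector of Wᗮ if z = 0)
  obtain ⟨zh, hzh1, hzhW, hzhz⟩ : ∃ zh : EuclideanSpace ℂ (Fin d1 × Fin d2), ‖zh‖ = 1 ∧ zh ∈ Wᗮ ∧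
      (z ≠ 0 → z = (‖z‖ : ℂ) • zh) := by
    by_cases hz : z = 0
    · have hklt : k < Module.finrank ℂ (EuclideanSpace ℂ (Fin d1 × Fin d2)) := by
        rw [hdim]; nlinarith
      have hWo : Wᗮ ≠ ⊥ := by
        intro hbot
        have := Submodule.finrank_add_finrank_orthogonal (K := W)
        rw [hbot] at this
        simp only [finrank_bot, add_zero] at this
        omega
      obtain ⟨x, hxW, hx0⟩ := Submodule.exists_mem_ne_zero_of_ne_bot hWo
      have hnx : ‖x‖ ≠ 0 := norm_ne_zero_iff.2 hx0
      refine ⟨(‖x‖ : ℂ)⁻¹ • x, ?_, Wᗮ.smul_mem _ hxW, fun h => absurd hz h⟩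
      simp only [norm_smul, norm_inv, Complex.norm_real, norm_norm]
      field_simp
    · have hnz : ‖z‖ ≠ 0 := norm_ne_zero_iff.2 hz
      refine ⟨(‖z‖ : ℂ)⁻¹ • z, ?_, Wᗮ.smul_mem _ hzW, fun _ => ?_⟩
      · simp only [norm_smul, norm_inv, Complex.norm_real, norm_norm]
        field_simp
      · rw [smul_smul, mul_inv_cancel₀ (by exact_mod_cast hnz), one_smul]
  -- index bookkeeping
  have h0d1 : 0 < d1 := by omega
  have h1d1 : 1 < d1 := by omega
  have h0d2 : 0 < d2 := by omega
  set idx : Fin k → Fin d1 × Fin d2 := fun j => (⟨0, h0d1⟩, ⟨j, lt_of_lt_of_le j.2 hk⟩)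
    with hidx
  set q : Fin d1 × Fin d2 := (⟨1, h1d1⟩, ⟨0, h0d2⟩) with hq
  have hidx_inj : Function.Injective idx := by
    intro a b hab
    rw [hidx] at hab
    simp only [Prod.mk.injEq, Fin.mk.injEq] at hab
    exact Fin.ext hab.2
  have hqidx : ∀ j, q ≠ idx j := by
    intro j h
    rw [hq, hidx] at h
    simp only [Prod.mk.injEq, Fin.mk.injEq] at h
    omega
  set s : Set (Fin d1 × Fin d2) := insert q (Set.range idx) with hs
  set vV : Fin d1 × Fin d2 → EuclideanSpace ℂ (Fin d1 × Fin d2) := fun p =>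
    if h2 : (p.1 : ℕ) = 0 ∧ (p.2 : ℕ) < k then ((bW ⟨p.2, h2.2⟩ : W) : EuclideanSpace ℂ (Fin d1 × Fin d2)) else zh with hvV
  have hvV_idx : ∀ j : Fin k, vV (idx j) = ((bW j : W) : EuclideanSpace ℂ (Fin d1 × Fin d2)) := by
    intro j
    simp only [hvV, hidx]
    rw [dif_pos (show (True ∧ (j:ℕ) < k) from ⟨trivial, j.2⟩)]
  have hvV_q : vV q = zh := by
    simp only [hvV, hq]
    rw [dif_neg]
    simp
  have hWzero : ∀ x ∈ W, ∀ y ∈ Wᗮ, (inner ℂ y x : ℂ) = 0 := by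
    intro x hx y hy
    exact Submodule.inner_left_of_mem_orthogonal hx hy
  -- orthonormality of the prescribed family
  have horthV : Orthonormal ℂ (s.restrict vV) := by
    constructor
    · rintro ⟨p, hp⟩
      rcases hp with hp | ⟨j, rfl⟩
      · show ‖vV p‖ = 1
        rw [hp, hvV_q]; exact hzh1
      · show ‖vV (idx j)‖ = 1
        rw [hvV_idx j]
        exact bW.orthonormal.1 j
    · rintro ⟨p₁, hp₁⟩ ⟨p₂, hp₂⟩ hne12
      have hne' : p₁ ≠ p₂ := fun h => hne12 (Subtype.ext h)
      show inner ℂ (vV p₁) (vV p₂) = 0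
      rcases hp₁ with hp₁ | ⟨j₁, rfl⟩ <;> rcases hp₂ with hp₂ | ⟨j₂, rfl⟩
      · exact absurd (hp₁.trans hp₂.symm) hne'
      · rw [hp₁, hvV_q, hvV_idx]
        exact hWzero _ (bW j₂).2 _ hzhW
      · rw [hp₂, hvV_q, hvV_idx]
        rw [inner_eq_zero_symm]
        exact hWzero _ (bW j₁).2 _ hzhW
      · rw [hvV_idx, hvV_idx, ← Submodule.coe_inner]
        exact bW.orthonormal.2 (fun h => hne' (congrArg idx h))
  obtain ⟨b, hb⟩ := horthV.exists_orthonormalBasis_extension_of_card_eq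
    (by rw [hdim]; simp) 
  have hbidx : ∀ j : Fin k, b (idx j) = ((bW j : W) : EuclideanSpace ℂ (Fin d1 × Fin d2)) := by
    intro j
    rw [hb _ (Set.mem_insert_of_mem _ ⟨j, rfl⟩), hvV_idx]
  have hbq : b q = zh := by rw [hb _ (Set.mem_insert _ _), hvV_q]
  set U := b.repr with hU
  -- every element of W is mapped to a product vector
  have hprodW : ∀ x ∈ W, ProdVec d1 d2 (U x) := by
    intro x hx
    have hWle : x ∈ Submodule.span ℂ (Set.range fun j : Fin k => b (idx j)) := by
      have hsum := bW.sum_repr ⟨x, hx⟩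
      have hsum' : x = ∑ j, bW.repr ⟨x, hx⟩ j • b (idx j) := by
        calc x = ((∑ j, bW.repr ⟨x, hx⟩ j • bW j : W) : EuclideanSpace ℂ (Fin d1 × Fin d2)) := by rw [hsum]
        _ = ∑ j, bW.repr ⟨x, hx⟩ j • ((bW j : W) : EuclideanSpace ℂ (Fin d1 × Fin d2)) := by
            push_cast; rfl
        _ = ∑ j, bW.repr ⟨x, hx⟩ j • b (idx j) := by
            simp_rw [hbidx]
      rw [hsum']
      exact Submodule.sum_mem _ fun j _ =>
        Submodule.smul_mem _ _ (Submodule.subset_span ⟨j, rfl⟩)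
    clear hx
    have hx0 : ∀ p : Fin d1 × Fin d2, (p.1 : ℕ) ≠ 0 → U x p = 0 := by
      intro p hp
      rw [hU, b.repr_apply_apply]
      induction hWle using Submodule.span_induction with
      | mem y hy =>
          obtain ⟨j, rfl⟩ := hy
          exact b.orthonormal.2 (fun h => hp (by rw [h]))
      | zero => exact inner_zero_right _
      | add y z' _ _ hy hz' => rw [inner_add_right, hy, hz', add_zero]
      | smul c y _ hy => rw [inner_smul_right, hy, mul_zero]
    refine ⟨fun a => if (a : ℕ) = 0 then 1 else 0, fun y => U x (⟨0, h0d1⟩, y), ?_⟩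
    rintro ⟨a, y⟩
    by_cases h : (a : ℕ) = 0
    · have ha : a = ⟨0, h0d1⟩ := Fin.ext h
      rw [ha]
      simp
    · rw [hx0 _ h]
      simp [h]
  -- ψ i is mapped to a product vector
  have hUpsi : U (ψ i) = (‖w‖ : ℂ) • EuclideanSpace.single (⟨0, h0d1⟩, (⟨0, h0d2⟩ : Fin d2)) (1 : ℂ)
      + (‖z‖ : ℂ) • EuclideanSpace.single q (1 : ℂ) := by
    have hpsi : ψ i = w + z := by rw [hzdef]; abel
    have hUw : U w = (‖w‖ : ℂ) • EuclideanSpace.single (⟨0, h0d1⟩, (⟨0, h0d2⟩ : Fin d2)) (1 : ℂ) := by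
      by_cases hw : w = 0
      · rw [hw]
        simp [hw, norm_zero]
      · obtain ⟨h0, hb0⟩ := hbW hw
        have hnw : (‖w‖ : ℂ) ≠ 0 := by
          exact_mod_cast norm_ne_zero_iff.2 hw
        have hw' : w = (‖w‖ : ℂ) • b (idx ⟨0, h0⟩) := by
          rw [hbidx, hb0, smul_smul, mul_inv_cancel₀ hnw, one_smul]
        have hidx0 : idx ⟨0, h0⟩ = (⟨0, h0d1⟩, (⟨0, h0d2⟩ : Fin d2)) := by
          rw [hidx]
        conv_lhs => rw [hw']
        rw [map_smul, hU, b.repr_self, hidx0]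
    have hUz : U z = (‖z‖ : ℂ) • EuclideanSpace.single q (1 : ℂ) := by
      by_cases hz : z = 0
      · rw [hz]; simp [hz, norm_zero]
      · conv_lhs => rw [hzhz hz]
        rw [map_smul, ← hbq, hU, b.repr_self]
    rw [hpsi, map_add, hUw, hUz]
  have hprodPsi : ProdVec d1 d2 (U (ψ i)) := by
    refine ⟨fun a => if (a : ℕ) = 0 then (‖w‖ : ℂ) else if (a : ℕ) = 1 then (‖z‖ : ℂ) else 0,
      fun y => if (y : ℕ) = 0 then 1 else 0, ?_⟩
    rintro ⟨a, y⟩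
    rw [hUpsi]
    have happ : (((‖w‖ : ℂ) • EuclideanSpace.single (⟨0, h0d1⟩, (⟨0, h0d2⟩ : Fin d2)) (1 : ℂ)
        + (‖z‖ : ℂ) • EuclideanSpace.single q (1 : ℂ)) : EuclideanSpace ℂ (Fin d1 × Fin d2)) (a, y)
        = (‖w‖ : ℂ) * (if (a, y) = (⟨0, h0d1⟩, (⟨0, h0d2⟩ : Fin d2)) then 1 else 0)
        + (‖z‖ : ℂ) * (if (a, y) = q then 1 else 0) := by
      simp [EuclideanSpace.single_apply]
    rw [happ]
    have heq1 : ((a, y) = ((⟨0, h0d1⟩ : Fin d1), (⟨0, h0d2⟩ : Fin d2)))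
        ↔ ((a : ℕ) = 0 ∧ (y : ℕ) = 0) := by
      simp [Prod.ext_iff, Fin.ext_iff]
    have heq2 : ((a, y) = q) ↔ ((a : ℕ) = 1 ∧ (y : ℕ) = 0) := by
      rw [hq]; simp [Prod.ext_iff, Fin.ext_iff]
    by_cases ha0 : (a : ℕ) = 0 <;> by_cases ha1 : (a : ℕ) = 1 <;>
      by_cases hy0 : (y : ℕ) = 0 <;>
      simp [heq1, heq2, ha0, ha1, hy0] <;> ring
  -- contradiction with absolute entanglement
  obtain ⟨i', hni'⟩ := habs U
  apply hni'
  by_cases hii : i' = i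
  · rw [hii]; exact hprodPsi
  · exact hprodW _ (Submodule.subset_span ⟨i', hii, rfl⟩)
end
end

section
/- Let d = d1*d2 with 2 ≤ d1 ≤ d2. Suppose S = {ψ_1,...,ψ_N} ⊆ C^d can be partitioned into k ≤ d1 disjoint subsets S_1, ..., S_k such that any two vectors from different subsets are orthogonal, and each S_i spans a subspace of dimension at most d2. Then there exists a unitary U ∈ U(d) such that U|ψ⟩ is a product vector in C^{d1} ⊗ C^{d2} for every ψ ∈ S. In particular, S is not an absolutely entangled set. -/
set_option maxHeartbeats 1000000

noncomputable section

open scoped InnerProductSpace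

private lemma aux_sigma_orthonormal {E : Type*} [NormedAddCommGroup E]
    [InnerProductSpace ℂ E] {k : ℕ} {m : Fin k → ℕ}
    (V : Fin k → Submodule ℂ E)
    (ho : ∀ i i' : Fin k, i ≠ i' → V i ⟂ V i')
    (b : ∀ i, OrthonormalBasis (Fin (m i)) ℂ (V i)) :
    Orthonormal ℂ (fun x : Σ i : Fin k, Fin (m i) => ((b x.1 x.2 : E))) := by
  have hOF : OrthogonalFamily ℂ (fun i => ↥(V i)) (fun i => (V i).subtypeₗᵢ) := by
    intro i i' hne x y
    exact Submodule.isOrtho_iff_inner_eq.mp (ho i i' hne) x x.2 y y.2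
  exact hOF.orthonormal_sigma_orthonormal (fun i => (b i).orthonormal)

theorem stmt2 (d1 d2 N k : ℕ) (hd1 : 2 ≤ d1) (hd12 : d1 ≤ d2) (hk : k ≤ d1)
    (ψ : Fin N → EuclideanSpace ℂ (Fin d1 × Fin d2))
    -- `f` assigns each state to one of the `k` disjoint subsets `S_i = f ⁻¹ {i}`
    (f : Fin N → Fin k)
    (horth : ∀ j j' : Fin N, f j ≠ f j' →
      inner ℂ (ψ j) (ψ j') = (0 : ℂ))
    (hdim : ∀ i : Fin k,
      Module.finrank ℂ (Submodule.span ℂ (ψ '' {j : Fin N | f j = i})) ≤ d2) :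
    ∃ U : EuclideanSpace ℂ (Fin d1 × Fin d2) ≃ₗᵢ[ℂ] EuclideanSpace ℂ (Fin d1 × Fin d2),
      ∀ j : Fin N, ProdVec d1 d2 (U (ψ j)) := by
  classical
  set V : Fin k → Submodule ℂ (EuclideanSpace ℂ (Fin d1 × Fin d2)) :=
    fun i => Submodule.span ℂ (ψ '' {j : Fin N | f j = i}) with hV
  -- pairwise orthogonality of the spans
  have ho : ∀ i i' : Fin k, i ≠ i' → V i ⟂ V i' := by
    intro i i' hne
    refine Submodule.isOrtho_span.2 ?_
    rintro u ⟨j, hj, rfl⟩ v ⟨j', hj', rfl⟩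
    exact horth j j' (by simp only [Set.mem_setOf_eq] at hj hj'; rw [hj, hj']; exact hne)
  set m : Fin k → ℕ := fun i => Module.finrank ℂ (V i) with hm
  set bV : ∀ i, OrthonormalBasis (Fin (m i)) ℂ (V i) := fun i => stdOrthonormalBasis ℂ (V i)
    with hbV
  set w : (Σ i : Fin k, Fin (m i)) → EuclideanSpace ℂ (Fin d1 × Fin d2) :=
    fun x => ((bV x.1 x.2 : ↥(V x.1)) : EuclideanSpace ℂ (Fin d1 × Fin d2)) with hw
  have hwon : Orthonormal ℂ w := aux_sigma_orthonormal V ho bV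
  -- each V i is the span of its basis vectors
  have hVspan : ∀ i : Fin k, V i = Submodule.span ℂ (Subtype.val '' Set.range (bV i)) := by
    intro i
    have h1 : Submodule.span ℂ (Set.range (bV i)) = ⊤ := by
      rw [← (bV i).coe_toBasis]; exact (bV i).toBasis.span_eq
    calc V i = Submodule.map (V i).subtype ⊤ := by simp
      _ = Submodule.map (V i).subtype (Submodule.span ℂ (Set.range (bV i))) := by rw [h1]
      _ = Submodule.span ℂ (Subtype.val '' Set.range (bV i)) := Submodule.map_span _ _
  -- the injection of indices
  set ρ : (Σ i : Fin k, Fin (m i)) → Fin d1 × Fin d2 :=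
    fun x => (Fin.castLE hk x.1, Fin.castLE (hdim x.1) x.2) with hρ
  have hρinj : Function.Injective ρ := by
    rintro ⟨i, t⟩ ⟨i', t'⟩ h
    simp only [hρ, Prod.mk.injEq] at h
    obtain ⟨h1, h2⟩ := h
    have hi : i = i' := Fin.castLE_injective hk h1
    subst hi
    have ht : t = t' := Fin.castLE_injective (hdim i) h2
    subst ht; rfl
  set e := Equiv.ofInjective ρ hρinj with he
  set vfun : Fin d1 × Fin d2 → EuclideanSpace ℂ (Fin d1 × Fin d2) := fun p =>
    if h : p ∈ Set.range ρ then w (e.symm ⟨p, h⟩) else 0 with hvfun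
  have hvρ : ∀ x, vfun (ρ x) = w x := by
    intro x
    have hmem : ρ x ∈ Set.range ρ := ⟨x, rfl⟩
    simp only [hvfun, dif_pos hmem]
    exact congrArg w (hρinj (Equiv.apply_ofInjective_symm hρinj ⟨ρ x, hmem⟩))
  have hvon : Orthonormal ℂ ((Set.range ρ).restrict vfun) := by
    have : (Set.range ρ).restrict vfun = w ∘ e.symm := by
      funext p
      show vfun p.1 = _
      simp only [Set.restrict_apply, Function.comp_apply, hvfun, dif_pos p.2]
    rw [this]
    exact hwon.comp _ e.symm.injective
  have hcard : Module.finrank ℂ (EuclideanSpace ℂ (Fin d1 × Fin d2))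
      = Fintype.card (Fin d1 × Fin d2) := finrank_euclideanSpace
  obtain ⟨b, hb⟩ := hvon.exists_orthonormalBasis_extension_of_card_eq hcard
  have hbρ : ∀ x, b (ρ x) = w x := fun x => (hb (ρ x) ⟨x, rfl⟩).trans (hvρ x)
  refine ⟨b.repr, ?_⟩
  intro j
  have hψmem : ψ j ∈ V (f j) :=
    Submodule.subset_span ⟨j, by simp, rfl⟩
  -- key vanishing claim
  have hkey : ∀ p : Fin d1 × Fin d2, p.1 ≠ Fin.castLE hk (f j) → (inner ℂ (b p) (ψ j) : ℂ) = 0 := by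
    intro p hp
    by_cases hmem : p ∈ Set.range ρ
    · obtain ⟨x, rfl⟩ := hmem
      have hx1 : x.1 ≠ f j := by
        intro h; exact hp (by simp [hρ, h])
      have hbw : b (ρ x) ∈ V x.1 := by rw [hbρ]; exact (bV x.1 x.2).2
      exact Submodule.isOrtho_iff_inner_eq.mp (ho x.1 (f j) hx1) _ hbw _ hψmem
    · -- b p is orthogonal to all w x, hence to the span containing ψ j
      have horthall : ∀ x, (inner ℂ (b p) (w x) : ℂ) = 0 := by
        intro x
        rw [← hbρ x]
        exact b.orthonormal.2 (fun h => hmem ⟨x, h.symm⟩)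
      have hsub : V (f j) ≤ Submodule.span ℂ (Set.range w) := by
        rw [hVspan (f j)]
        apply Submodule.span_mono
        rintro _ ⟨_, ⟨t, rfl⟩, rfl⟩
        exact ⟨⟨f j, t⟩, rfl⟩
      have hgen : ∀ y ∈ Submodule.span ℂ (Set.range w), (inner ℂ (b p) y : ℂ) = 0 := by
        intro y hy
        induction hy using Submodule.span_induction with
        | mem y hy => obtain ⟨x, rfl⟩ := hy; exact horthall x
        | zero => exact inner_zero_right _
        | add y z _ _ hy hz => rw [inner_add_right, hy, hz, add_zero]
        | smul c y _ hy => rw [inner_smul_right, hy, mul_zero]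
      exact hgen _ (hsub hψmem)
  refine ⟨fun i1 => if i1 = Fin.castLE hk (f j) then 1 else 0,
    fun p2 => b.repr (ψ j) (Fin.castLE hk (f j), p2), ?_⟩
  intro p
  show b.repr (ψ j) p = (if p.1 = Fin.castLE hk (f j) then 1 else 0)
    * b.repr (ψ j) (Fin.castLE hk (f j), p.2)
  by_cases hp : p.1 = Fin.castLE hk (f j)
  · have hpe : p = (Fin.castLE hk (f j), p.2) := by
      cases p; simp_all
    rw [if_pos hp, one_mul]
    conv_lhs => rw [hpe]
  · rw [if_neg hp, zero_mul, b.repr_apply_apply]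
    exact hkey p hp
end
end

section
/- Let d = d1*d2 with d1, d2 ≥ 2, and let ξ_1, ..., ξ_d be an orthonormal basis of C^d. Let a_i, b_i ∈ C for i = 2,...,d with b_i ≠ 0, and suppose there exists λ ∈ (0,1) such that λ|a_i|^2 ≥ |b_i|^2/2 for all i = 2,...,d. Then the set of d vectors {ξ_1} ∪ {a_i ξ_1 + b_i ξ_i : i = 2,...,d} is an absolutely entangled set with respect to the bipartition (d1, d2): for every unitary U on C^d, at least one of the d vectors is mapped by U to a vector that is not a product vector in C^{d1} ⊗ C^{d2}. -/
open Finset Complex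

local notation "⟪" x ", " y "⟫" => @inner ℂ _ _ x y

lemma sum_conj_mul_self {ι : Type*} [Fintype ι] (w : ι → ℂ) :
    ∑ x, (starRingEnd ℂ) (w x) * w x = ((∑ x, Complex.normSq (w x) : ℝ) : ℂ) := by
  push_cast
  refine Finset.sum_congr rfl fun x _ => ?_
  rw [mul_comm, Complex.mul_conj]

lemma sum_prod_factor {d1 d2 : ℕ} (φ : Fin d1 → ℂ) (χ : Fin d2 → ℂ) :
    ∑ p : Fin d1 × Fin d2, φ p.1 * χ p.2 = (∑ x, φ x) * (∑ y, χ y) := by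
  rw [Finset.sum_mul_sum, Fintype.sum_prod_type]

lemma sum_prod_factorR {d1 d2 : ℕ} (φ : Fin d1 → ℝ) (χ : Fin d2 → ℝ) :
    ∑ p : Fin d1 × Fin d2, φ p.1 * χ p.2 = (∑ x, φ x) * (∑ y, χ y) := by
  rw [Finset.sum_mul_sum, Fintype.sum_prod_type]

lemma norm_mul_self_euclid {ι : Type*} [Fintype ι] (z : EuclideanSpace ℂ ι) :
    ‖z‖ * ‖z‖ = ∑ i, Complex.normSq (z i) := by
  rw [EuclideanSpace.norm_eq, Real.mul_self_sqrt (by positivity)]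
  refine Finset.sum_congr rfl fun i _ => ?_
  rw [Complex.sq_norm]

lemma cauchy_schwarz_normSq {k : ℕ} (X Y : EuclideanSpace ℂ (Fin k)) :
    Complex.normSq (∑ i, (starRingEnd ℂ) (X i) * Y i)
      ≤ (∑ i, Complex.normSq (X i)) * (∑ i, Complex.normSq (Y i)) := by
  have hXY : ⟪X, Y⟫ = ∑ i, (starRingEnd ℂ) (X i) * Y i := by
    rw [PiLp.inner_apply]; simp [RCLike.inner_apply]; exact Finset.sum_congr rfl fun i _ => mul_comm _ _
  have h := norm_inner_le_norm (𝕜 := ℂ) X Y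
  have hsq := mul_self_le_mul_self (norm_nonneg ⟪X, Y⟫) h
  have hfin : Complex.normSq ⟪X, Y⟫ ≤ (∑ i, Complex.normSq (X i)) * (∑ i, Complex.normSq (Y i)) := by
    have hn : Complex.normSq ⟪X, Y⟫ = ‖⟪X, Y⟫‖ * ‖⟪X, Y⟫‖ := by
      rw [← Complex.sq_norm]; ring
    rw [hn, ← norm_mul_self_euclid X, ← norm_mul_self_euclid Y]
    calc ‖⟪X, Y⟫‖ * ‖⟪X, Y⟫‖ ≤ ‖X‖ * ‖Y‖ * (‖X‖ * ‖Y‖) := hsq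
    _ = ‖X‖ * ‖X‖ * (‖Y‖ * ‖Y‖) := by ring
  rwa [hXY] at hfin

lemma keyIneq (A B M N t lam : ℝ) (hA : 0 ≤ A) (hB : 0 ≤ B)
    (hAM : A ≤ M) (hBN : B ≤ N) (hMN : M * N = A * B + t)
    (ht : 0 < t) (hlt : t ≤ 2 * lam * (A * B)) (hl0 : 0 < lam) (hl1 : lam < 1) :
    2 / (1 + Real.sqrt (1 + 2 * lam)) * t ≤ A * N + B * M - 2 * (A * B) := by
  set w := Real.sqrt (1 + 2 * lam) with hw
  have hw2 : w ^ 2 = 1 + 2 * lam := Real.sq_sqrt (by linarith)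
  have hw1 : 1 < w := by nlinarith [Real.sqrt_nonneg (1 + 2 * lam)]
  set s := A * B with hs
  have hs0 : 0 < s := by nlinarith
  have hAN : 0 ≤ A * N := mul_nonneg hA (le_trans hB hBN)
  have hBM : 0 ≤ B * M := mul_nonneg hB (le_trans hA hAM)
  have hprod : (A * N) * (B * M) = s * (s + t) := by
    have h1 : (A * N) * (B * M) = (A * B) * (M * N) := by ring
    rw [h1, hMN]
  have amgm : 2 * Real.sqrt ((A * N) * (B * M)) ≤ A * N + B * M := by
    nlinarith [Real.sq_sqrt (mul_nonneg hAN hBM), Real.sqrt_nonneg ((A*N)*(B*M)),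
      sq_nonneg (A * N - B * M), sq_nonneg (Real.sqrt ((A*N)*(B*M)) - A*N),
      sq_nonneg (Real.sqrt ((A*N)*(B*M)) - B*M)]
  have h1w : (0:ℝ) < 1 + w := by linarith
  have hsq : s + t / (1 + w) ≤ Real.sqrt (s * (s + t)) := by
    rw [Real.le_sqrt (by positivity) (by positivity)]
    have key : 0 ≤ s * (s + t) - (s + t / (1 + w)) ^ 2 := by
      have expand : s * (s + t) - (s + t / (1 + w)) ^ 2
          = (t * (s * (w ^ 2 - 1) - t)) / (1 + w) ^ 2 := by
        field_simp
        ring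
      rw [expand]
      have : 0 ≤ s * (w ^ 2 - 1) - t := by rw [hw2]; linarith
      positivity
    linarith
  rw [hprod] at amgm
  have : 2 * (s + t / (1 + w)) ≤ A * N + B * M := by
    calc 2 * (s + t / (1 + w)) ≤ 2 * Real.sqrt (s * (s + t)) := by linarith [hsq]
    _ ≤ A * N + B * M := amgm
  have h2 : 2 / (1 + w) * t = 2 * (t / (1 + w)) := by ring
  linarith [this]

noncomputable section

set_option maxHeartbeats 1000000 in
theorem stmt3 (d1 d2 : ℕ) (hd1 : 2 ≤ d1) (hd2 : 2 ≤ d2)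
    (ξ : Fin (d1 * d2) → EuclideanSpace ℂ (Fin d1 × Fin d2))
    (hON : Orthonormal ℂ ξ)
    (a b : Fin (d1 * d2) → ℂ) (lam : ℝ) (hlam0 : 0 < lam) (hlam1 : lam < 1)
    (i0 : Fin (d1 * d2)) (hi0 : (i0 : ℕ) = 0)
    (hb : ∀ i, i ≠ i0 → b i ≠ 0)
    (hab : ∀ i, i ≠ i0 → ‖b i‖ ^ 2 / 2 ≤ lam * ‖a i‖ ^ 2)
    (ψ : Fin (d1 * d2) → EuclideanSpace ℂ (Fin d1 × Fin d2))
    (hψ0 : ψ i0 = ξ i0)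
    (hψ : ∀ i, i ≠ i0 → ψ i = a i • ξ i0 + b i • ξ i) :
    ∀ U : EuclideanSpace ℂ (Fin d1 × Fin d2) ≃ₗᵢ[ℂ] EuclideanSpace ℂ (Fin d1 × Fin d2),
      ∃ i : Fin (d1 * d2), ¬ ProdVec d1 d2 (U (ψ i)) := by
  intro U
  by_contra hcon
  push_neg at hcon
  simp only [not_not, ProdVec] at hcon
  choose uu vv huv using hcon
  set g : Fin (d1 * d2) → EuclideanSpace ℂ (Fin d1 × Fin d2) := fun i => U (ξ i) with hgdef
  have hg : Orthonormal ℂ g := hON.comp_linearIsometryEquiv U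
  have hgij : ∀ i j, ⟪g i, g j⟫ = if i = j then (1:ℂ) else 0 := orthonormal_iff_ite.mp hg
  have he : ∀ p, g i0 p = uu i0 p.1 * vv i0 p.2 := by
    intro p
    have h := huv i0 p
    rwa [hψ0] at h
  have he2 : ∑ p, Complex.normSq (g i0 p) = 1 := by
    have h := hgij i0 i0
    simp only [if_pos rfl] at h
    rw [PiLp.inner_apply] at h
    simp only [RCLike.inner_apply, mul_comm _ ((starRingEnd ℂ) _)] at h
    rw [sum_conj_mul_self (fun p => g i0 p)] at h
    norm_num at h
    exact_mod_cast h
  -- normalization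
  have hfac : (∑ x, Complex.normSq (uu i0 x)) * (∑ y, Complex.normSq (vv i0 y)) = 1 := by
    rw [← sum_prod_factorR, ← he2]
    refine Finset.sum_congr rfl fun p _ => ?_
    rw [he p, Complex.normSq_mul]
  set Su := ∑ x, Complex.normSq (uu i0 x) with hSu
  have hSunn : 0 ≤ Su := Finset.sum_nonneg fun x _ => Complex.normSq_nonneg _
  have hSvnn : 0 ≤ ∑ y, Complex.normSq (vv i0 y) := Finset.sum_nonneg fun y _ => Complex.normSq_nonneg _
  have hSu0 : 0 < Su := by nlinarith
  set ru := Real.sqrt Su with hru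
  have hru0 : 0 < ru := Real.sqrt_pos.mpr hSu0
  have hrusq : ru * ru = Su := Real.mul_self_sqrt hSu0.le
  set u : Fin d1 → ℂ := fun x => uu i0 x / (ru : ℂ) with hu
  set v : Fin d2 → ℂ := fun y => (ru : ℂ) * vv i0 y with hv
  have hruC : ((ru : ℂ)) ≠ 0 := by exact_mod_cast hru0.ne'
  have hNu1 : ∑ x, Complex.normSq (u x) = 1 := by
    have hx : ∀ x, Complex.normSq (u x) = Complex.normSq (uu i0 x) / Su := by
      intro x
      rw [hu]
      simp only [Complex.normSq_div, Complex.normSq_ofReal]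
      rw [hrusq]
    rw [Finset.sum_congr rfl fun x _ => hx x, ← Finset.sum_div, ← hSu, div_self hSu0.ne']
  have hNv1 : ∑ y, Complex.normSq (v y) = 1 := by
    simp only [hv, Complex.normSq_mul, Complex.normSq_ofReal]
    rw [← Finset.mul_sum, hrusq]
    exact hfac
  have hev : ∀ p, g i0 p = u p.1 * v p.2 := by
    intro p
    rw [he p, hu, hv]
    field_simp
  have hNuC : ∑ x, (starRingEnd ℂ) (u x) * u x = 1 := by
    rw [sum_conj_mul_self, hNu1]; norm_num
  have hNvC : ∑ y, (starRingEnd ℂ) (v y) * v y = 1 := by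
    rw [sum_conj_mul_self, hNv1]; norm_num
  -- slice functionals
  set F : Fin (d1*d2) → Fin d2 → ℂ := fun i q => ∑ x, (starRingEnd ℂ) (u x) * g i (x, q) with hF
  set G : Fin (d1*d2) → Fin d1 → ℂ := fun i x => ∑ y, (starRingEnd ℂ) (v y) * g i (x, y) with hG
  set c : ℝ := 2 / (1 + Real.sqrt (1 + 2 * lam)) with hc
  -- key per-index lower bound
  have key : ∀ i ∈ Finset.univ.erase i0,
      c ≤ (∑ q, Complex.normSq (F i q)) + (∑ x, Complex.normSq (G i x)) := by
    intro i hi'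
    have hi : i ≠ i0 := Finset.ne_of_mem_erase hi'
    set α : ℂ := ∑ x, (starRingEnd ℂ) (u x) * uu i x with hα
    set β : ℂ := ∑ y, (starRingEnd ℂ) (v y) * vv i y with hβ
    have hfi : U (ψ i) = a i • g i0 + b i • g i := by
      rw [hψ i hi, map_add, map_smul, map_smul]
    have hfp : ∀ p, uu i p.1 * vv i p.2 = a i * g i0 p + b i * g i p := by
      intro p
      rw [← huv i p, hfi]
      rfl
    have hbg : ∀ p : Fin d1 × Fin d2, b i * g i p = uu i p.1 * vv i p.2 - a i * (u p.1 * v p.2) := by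
      intro p
      rw [hfp p, hev p]
      ring
    -- a i = α * β
    have hinner1 : ⟪g i0, U (ψ i)⟫ = a i := by
      rw [hfi, inner_add_right, inner_smul_right, inner_smul_right, hgij i0 i0, hgij i0 i,
        if_pos rfl, if_neg (Ne.symm hi)]
      ring
    have hinner2 : ⟪g i0, U (ψ i)⟫ = α * β := by
      rw [PiLp.inner_apply]
      simp only [RCLike.inner_apply, mul_comm _ ((starRingEnd ℂ) _)]
      calc ∑ p : Fin d1 × Fin d2, (starRingEnd ℂ) (g i0 p) * (U (ψ i)) p
          = ∑ p : Fin d1 × Fin d2,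
              ((starRingEnd ℂ) (u p.1) * uu i p.1) * ((starRingEnd ℂ) (v p.2) * vv i p.2) := by
            refine Finset.sum_congr rfl fun p _ => ?_
            rw [hev p, huv i p, map_mul]
            ring
        _ = α * β := sum_prod_factor (fun x => (starRingEnd ℂ) (u x) * uu i x) (fun y => (starRingEnd ℂ) (v y) * vv i y)
    have ha : a i = α * β := by rw [← hinner1, hinner2]
    -- norms
    have hnormf : (∑ x, Complex.normSq (uu i x)) * (∑ y, Complex.normSq (vv i y))
        = Complex.normSq (a i) + Complex.normSq (b i) := by
      have h1 : ⟪U (ψ i), U (ψ i)⟫ = ((Complex.normSq (a i) + Complex.normSq (b i) : ℝ) : ℂ) := by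
        rw [hfi]
        simp only [inner_add_left, inner_add_right, inner_smul_left, inner_smul_right, hgij,
          if_pos rfl, if_neg hi, if_neg (Ne.symm hi)]
        push_cast
        rw [← Complex.mul_conj, ← Complex.mul_conj]
        ring
      have h2 : ⟪U (ψ i), U (ψ i)⟫
          = (((∑ x, Complex.normSq (uu i x)) * (∑ y, Complex.normSq (vv i y)) : ℝ) : ℂ) := by
        rw [PiLp.inner_apply]
        simp only [RCLike.inner_apply, mul_comm _ ((starRingEnd ℂ) _)]
        rw [sum_conj_mul_self (fun p => (U (ψ i)) p)]
        norm_cast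
        rw [← sum_prod_factorR]
        exact Finset.sum_congr rfl fun p _ => by rw [huv i p, Complex.normSq_mul]
      have h3 := h1.symm.trans h2
      exact_mod_cast h3.symm
    -- row slice identity
    have hFid : ∀ q, b i * F i q = α * vv i q - a i * v q := by
      intro q
      rw [hF]
      simp only
      rw [Finset.mul_sum]
      have hpt : ∀ x, b i * ((starRingEnd ℂ) (u x) * g i (x, q))
          = ((starRingEnd ℂ) (u x) * uu i x) * vv i q
            - a i * (((starRingEnd ℂ) (u x) * u x) * v q) := by
        intro x
        have h := hbg (x, q)
        calc b i * ((starRingEnd ℂ) (u x) * g i (x, q))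
            = (starRingEnd ℂ) (u x) * (b i * g i (x, q)) := by ring
          _ = (starRingEnd ℂ) (u x) * (uu i x * vv i q - a i * (u x * v q)) := by rw [h]
          _ = _ := by ring
      rw [Finset.sum_congr rfl fun x _ => hpt x, Finset.sum_sub_distrib, ← Finset.sum_mul,
        ← Finset.mul_sum, ← Finset.sum_mul, ← hα, hNuC]
      ring
    -- column slice identity
    have hGid : ∀ x, b i * G i x = β * uu i x - a i * u x := by
      intro x
      rw [hG]
      simp only
      rw [Finset.mul_sum]
      have hpt : ∀ y, b i * ((starRingEnd ℂ) (v y) * g i (x, y))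
          = ((starRingEnd ℂ) (v y) * vv i y) * uu i x
            - a i * (((starRingEnd ℂ) (v y) * v y) * u x) := by
        intro y
        have h := hbg (x, y)
        calc b i * ((starRingEnd ℂ) (v y) * g i (x, y))
            = (starRingEnd ℂ) (v y) * (b i * g i (x, y)) := by ring
          _ = (starRingEnd ℂ) (v y) * (uu i x * vv i y - a i * (u x * v y)) := by rw [h]
          _ = _ := by ring
      rw [Finset.sum_congr rfl fun y _ => hpt y, Finset.sum_sub_distrib, ← Finset.sum_mul,
        ← Finset.mul_sum, ← Finset.sum_mul, ← hβ, hNvC]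
      ring
    -- row sum real identity
    have hRsum : Complex.normSq (b i) * (∑ q, Complex.normSq (F i q))
        = Complex.normSq α * (∑ y, Complex.normSq (vv i y)) - Complex.normSq (a i) := by
      have hCid : ∑ q, (starRingEnd ℂ) (α * vv i q - a i * v q) * (α * vv i q - a i * v q)
          = ((starRingEnd ℂ) α * α) * (∑ y, (starRingEnd ℂ) (vv i y) * vv i y)
            - (starRingEnd ℂ) (a i) * a i := by
        have expand : ∀ q, (starRingEnd ℂ) (α * vv i q - a i * v q) * (α * vv i q - a i * v q)
            = ((starRingEnd ℂ) α * α) * ((starRingEnd ℂ) (vv i q) * vv i q)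
              + ((starRingEnd ℂ) (a i) * a i) * ((starRingEnd ℂ) (v q) * v q)
              - (((starRingEnd ℂ) α * a i) * ((starRingEnd ℂ) (vv i q) * v q)
                + ((starRingEnd ℂ) (a i) * α) * ((starRingEnd ℂ) (v q) * vv i q)) := by
          intro q
          simp only [map_sub, map_mul]
          ring
        rw [Finset.sum_congr rfl fun q _ => expand q]
        simp only [Finset.sum_sub_distrib, Finset.sum_add_distrib, ← Finset.mul_sum]
        have hcb : ∑ q, (starRingEnd ℂ) (vv i q) * v q = (starRingEnd ℂ) β := by
          rw [hβ, map_sum]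
          refine Finset.sum_congr rfl fun q _ => ?_
          rw [map_mul, Complex.conj_conj]
          ring
        rw [hcb, hNvC, ← hβ, ha]
        simp only [map_mul]
        ring
      -- convert to real
      have hL : ∑ q, (starRingEnd ℂ) (α * vv i q - a i * v q) * (α * vv i q - a i * v q)
          = ((∑ q, Complex.normSq (α * vv i q - a i * v q) : ℝ) : ℂ) :=
        sum_conj_mul_self _
      have hR : ((starRingEnd ℂ) α * α) * (∑ y, (starRingEnd ℂ) (vv i y) * vv i y)
            - (starRingEnd ℂ) (a i) * a i
          = ((Complex.normSq α * (∑ y, Complex.normSq (vv i y)) - Complex.normSq (a i) : ℝ) : ℂ) := by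
        rw [sum_conj_mul_self]
        rw [show (starRingEnd ℂ) α * α = ((Complex.normSq α : ℝ) : ℂ) by
          rw [mul_comm, Complex.mul_conj]]
        rw [show (starRingEnd ℂ) (a i) * a i = ((Complex.normSq (a i) : ℝ) : ℂ) by
          rw [mul_comm, Complex.mul_conj]]
        push_cast
        ring
      have hreal : ∑ q, Complex.normSq (α * vv i q - a i * v q)
          = Complex.normSq α * (∑ y, Complex.normSq (vv i y)) - Complex.normSq (a i) := by
        have := (hL.symm.trans hCid).trans hR
        exact_mod_cast this
      rw [← hreal, Finset.mul_sum]
      refine Finset.sum_congr rfl fun q _ => ?_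
      rw [← Complex.normSq_mul, hFid q]
    -- column sum real identity
    have hGsum : Complex.normSq (b i) * (∑ x, Complex.normSq (G i x))
        = Complex.normSq β * (∑ x, Complex.normSq (uu i x)) - Complex.normSq (a i) := by
      have hCid : ∑ x, (starRingEnd ℂ) (β * uu i x - a i * u x) * (β * uu i x - a i * u x)
          = ((starRingEnd ℂ) β * β) * (∑ x, (starRingEnd ℂ) (uu i x) * uu i x)
            - (starRingEnd ℂ) (a i) * a i := by
        have expand : ∀ x, (starRingEnd ℂ) (β * uu i x - a i * u x) * (β * uu i x - a i * u x)
            = ((starRingEnd ℂ) β * β) * ((starRingEnd ℂ) (uu i x) * uu i x)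
              + ((starRingEnd ℂ) (a i) * a i) * ((starRingEnd ℂ) (u x) * u x)
              - (((starRingEnd ℂ) β * a i) * ((starRingEnd ℂ) (uu i x) * u x)
                + ((starRingEnd ℂ) (a i) * β) * ((starRingEnd ℂ) (u x) * uu i x)) := by
          intro x
          simp only [map_sub, map_mul]
          ring
        rw [Finset.sum_congr rfl fun x _ => expand x]
        simp only [Finset.sum_sub_distrib, Finset.sum_add_distrib, ← Finset.mul_sum]
        have hcb : ∑ x, (starRingEnd ℂ) (uu i x) * u x = (starRingEnd ℂ) α := by
          rw [hα, map_sum]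
          refine Finset.sum_congr rfl fun x _ => ?_
          rw [map_mul, Complex.conj_conj]
          ring
        rw [hcb, hNuC, ← hα, ha]
        simp only [map_mul]
        ring
      have hL : ∑ x, (starRingEnd ℂ) (β * uu i x - a i * u x) * (β * uu i x - a i * u x)
          = ((∑ x, Complex.normSq (β * uu i x - a i * u x) : ℝ) : ℂ) :=
        sum_conj_mul_self _
      have hR : ((starRingEnd ℂ) β * β) * (∑ x, (starRingEnd ℂ) (uu i x) * uu i x)
            - (starRingEnd ℂ) (a i) * a i
          = ((Complex.normSq β * (∑ x, Complex.normSq (uu i x)) - Complex.normSq (a i) : ℝ) : ℂ) := by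
        rw [sum_conj_mul_self]
        rw [show (starRingEnd ℂ) β * β = ((Complex.normSq β : ℝ) : ℂ) by
          rw [mul_comm, Complex.mul_conj]]
        rw [show (starRingEnd ℂ) (a i) * a i = ((Complex.normSq (a i) : ℝ) : ℂ) by
          rw [mul_comm, Complex.mul_conj]]
        push_cast
        ring
      have hreal : ∑ x, Complex.normSq (β * uu i x - a i * u x)
          = Complex.normSq β * (∑ x, Complex.normSq (uu i x)) - Complex.normSq (a i) := by
        have := (hL.symm.trans hCid).trans hR
        exact_mod_cast this
      rw [← hreal, Finset.mul_sum]
      refine Finset.sum_congr rfl fun x _ => ?_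
      rw [← Complex.normSq_mul, hGid x]
    -- apply the key inequality
    have hAB : Complex.normSq (a i) = Complex.normSq α * Complex.normSq β := by
      rw [ha, Complex.normSq_mul]
    have hAM : Complex.normSq α ≤ ∑ x, Complex.normSq (uu i x) := by
      have h := cauchy_schwarz_normSq (k := d1) (WithLp.toLp 2 u) (WithLp.toLp 2 (uu i))
      simp only [WithLp.ofLp_toLp] at h
      rw [← hα] at h
      calc Complex.normSq α ≤ (∑ x, Complex.normSq (u x)) * (∑ x, Complex.normSq (uu i x)) := h
      _ = ∑ x, Complex.normSq (uu i x) := by rw [hNu1, one_mul]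
    have hBN : Complex.normSq β ≤ ∑ y, Complex.normSq (vv i y) := by
      have h := cauchy_schwarz_normSq (k := d2) (WithLp.toLp 2 v) (WithLp.toLp 2 (vv i))
      simp only [WithLp.ofLp_toLp] at h
      rw [← hβ] at h
      calc Complex.normSq β ≤ (∑ y, Complex.normSq (v y)) * (∑ y, Complex.normSq (vv i y)) := h
      _ = ∑ y, Complex.normSq (vv i y) := by rw [hNv1, one_mul]
    have ht : 0 < Complex.normSq (b i) := Complex.normSq_pos.mpr (hb i hi)
    have hlt : Complex.normSq (b i) ≤ 2 * lam * (Complex.normSq α * Complex.normSq β) := by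
      have h := hab i hi
      rw [Complex.sq_norm, Complex.sq_norm] at h
      rw [← hAB]
      linarith
    have hMN : (∑ x, Complex.normSq (uu i x)) * (∑ y, Complex.normSq (vv i y))
        = Complex.normSq α * Complex.normSq β + Complex.normSq (b i) := by
      rw [← hAB]; exact hnormf
    have hkey := keyIneq (Complex.normSq α) (Complex.normSq β)
      (∑ x, Complex.normSq (uu i x)) (∑ y, Complex.normSq (vv i y)) (Complex.normSq (b i)) lam
      (Complex.normSq_nonneg _) (Complex.normSq_nonneg _) hAM hBN hMN ht hlt hlam0 hlam1
    -- conclude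
    have hsum : Complex.normSq (b i) * ((∑ q, Complex.normSq (F i q)) + (∑ x, Complex.normSq (G i x)))
        = Complex.normSq α * (∑ y, Complex.normSq (vv i y))
          + Complex.normSq β * (∑ x, Complex.normSq (uu i x))
          - 2 * (Complex.normSq α * Complex.normSq β) := by
      rw [mul_add, hRsum, hGsum, hAB]
      ring
    have h1 : Complex.normSq (b i) * c
        ≤ Complex.normSq (b i) * ((∑ q, Complex.normSq (F i q)) + (∑ x, Complex.normSq (G i x))) := by
      rw [hsum, hc]
      calc Complex.normSq (b i) * (2 / (1 + Real.sqrt (1 + 2 * lam)))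
          = 2 / (1 + Real.sqrt (1 + 2 * lam)) * Complex.normSq (b i) := mul_comm _ _
        _ ≤ _ := hkey
    exact le_of_mul_le_mul_left h1 ht
  -- Bessel bounds
  set W : Fin d2 → EuclideanSpace ℂ (Fin d1 × Fin d2) :=
    fun q => WithLp.toLp 2 (fun p : Fin d1 × Fin d2 => u p.1 * (if p.2 = q then 1 else 0)) with hW
  set Z : Fin d1 → EuclideanSpace ℂ (Fin d1 × Fin d2) :=
    fun x => WithLp.toLp 2 (fun p : Fin d1 × Fin d2 => (if p.1 = x then 1 else 0) * v p.2) with hZ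
  have hWnorm : ∀ q, ‖W q‖ ^ 2 = 1 := by
    intro q
    rw [sq, norm_mul_self_euclid]
    rw [show ∑ p : Fin d1 × Fin d2, Complex.normSq (W q p) = ∑ x, ∑ y,
      Complex.normSq (u x * if y = q then 1 else 0) from Fintype.sum_prod_type _]
    have hx : ∀ x : Fin d1, ∑ y, Complex.normSq (u x * if y = q then 1 else 0)
        = Complex.normSq (u x) := by
      intro x
      simp [Complex.normSq_mul, apply_ite Complex.normSq, mul_ite]
    rw [Finset.sum_congr rfl fun x _ => hx x, hNu1]
  have hZnorm : ∀ x, ‖Z x‖ ^ 2 = 1 := by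
    intro x
    rw [sq, norm_mul_self_euclid]
    rw [show ∑ p : Fin d1 × Fin d2, Complex.normSq (Z x p) = ∑ x', ∑ y,
      Complex.normSq ((if x' = x then 1 else 0) * v y) from Fintype.sum_prod_type _]
    have hy : ∀ x' : Fin d1, ∑ y, Complex.normSq ((if x' = x then 1 else 0) * v y)
        = if x' = x then 1 else 0 := by
      intro x'
      by_cases h : x' = x
      · simp [h, hNv1]
      · simp [h]
    rw [Finset.sum_congr rfl fun x' _ => hy x']
    simp
  have hFW : ∀ j q, ⟪g j, W q⟫ = (starRingEnd ℂ) (F j q) := by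
    intro j q
    rw [PiLp.inner_apply]
    simp only [RCLike.inner_apply, mul_comm _ ((starRingEnd ℂ) _)]
    rw [hF]
    simp only [map_sum, map_mul, Complex.conj_conj]
    rw [show ∑ p : Fin d1 × Fin d2, (starRingEnd ℂ) (g j p) * W q p
      = ∑ x, ∑ y, (starRingEnd ℂ) (g j (x, y)) * (u x * if y = q then 1 else 0) from
      Fintype.sum_prod_type _]
    have hx : ∀ x : Fin d1, ∑ y, (starRingEnd ℂ) (g j (x, y)) * (u x * if y = q then 1 else 0)
        = u x * (starRingEnd ℂ) (g j (x, q)) := by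
      intro x
      rw [Finset.sum_eq_single q]
      · simp [mul_comm]
      · intro y _ hy; simp [hy]
      · intro h; exact absurd (Finset.mem_univ q) h
    rw [Finset.sum_congr rfl fun x _ => hx x]
  have hGZ : ∀ j x, ⟪g j, Z x⟫ = (starRingEnd ℂ) (G j x) := by
    intro j x
    rw [PiLp.inner_apply]
    simp only [RCLike.inner_apply, mul_comm _ ((starRingEnd ℂ) _)]
    rw [hG]
    simp only [map_sum, map_mul, Complex.conj_conj]
    rw [show ∑ p : Fin d1 × Fin d2, (starRingEnd ℂ) (g j p) * Z x p
      = ∑ x', ∑ y, (starRingEnd ℂ) (g j (x', y)) * ((if x' = x then 1 else 0) * v y) from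
      Fintype.sum_prod_type _]
    rw [Finset.sum_eq_single x]
    · refine Finset.sum_congr rfl fun y _ => by simp [mul_comm]
    · intro x' _ hx'; simp [hx']
    · intro h; exact absurd (Finset.mem_univ x) h
  have hbesR : ∀ q, ∑ j, Complex.normSq (F j q) ≤ 1 := by
    intro q
    have h := hg.sum_inner_products_le (s := Finset.univ) (W q)
    rw [hWnorm q] at h
    calc ∑ j, Complex.normSq (F j q) = ∑ j, ‖⟪g j, W q⟫‖ ^ 2 := by
          refine Finset.sum_congr rfl fun j _ => ?_
          rw [hFW j q, Complex.sq_norm, Complex.normSq_conj]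
      _ ≤ 1 := h
  have hbesC : ∀ x, ∑ j, Complex.normSq (G j x) ≤ 1 := by
    intro x
    have h := hg.sum_inner_products_le (s := Finset.univ) (Z x)
    rw [hZnorm x] at h
    calc ∑ j, Complex.normSq (G j x) = ∑ j, ‖⟪g j, Z x⟫‖ ^ 2 := by
          refine Finset.sum_congr rfl fun j _ => ?_
          rw [hGZ j x, Complex.sq_norm, Complex.normSq_conj]
      _ ≤ 1 := h
  have hFi0 : ∀ q, F i0 q = v q := by
    intro q
    rw [hF]
    simp only
    calc ∑ x, (starRingEnd ℂ) (u x) * g i0 (x, q)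
        = ∑ x, ((starRingEnd ℂ) (u x) * u x) * v q := by
          refine Finset.sum_congr rfl fun x _ => ?_
          rw [hev (x, q)]
          ring
      _ = v q := by rw [← Finset.sum_mul, hNuC, one_mul]
  have hGi0 : ∀ x, G i0 x = u x := by
    intro x
    rw [hG]
    simp only
    calc ∑ y, (starRingEnd ℂ) (v y) * g i0 (x, y)
        = ∑ y, ((starRingEnd ℂ) (v y) * v y) * u x := by
          refine Finset.sum_congr rfl fun y _ => ?_
          rw [hev (x, y)]
          ring
      _ = u x := by rw [← Finset.sum_mul, hNvC, one_mul]
  have hRbound : ∑ i ∈ Finset.univ.erase i0, ∑ q, Complex.normSq (F i q) ≤ (d2 : ℝ) - 1 := by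
    rw [Finset.sum_comm]
    have hq : ∀ q, ∑ i ∈ Finset.univ.erase i0, Complex.normSq (F i q)
        ≤ 1 - Complex.normSq (v q) := by
      intro q
      have hsplit := Finset.sum_erase_add Finset.univ
        (fun j => Complex.normSq (F j q)) (Finset.mem_univ i0)
      have hb' := hbesR q
      have hsub : ∑ i ∈ Finset.univ.erase i0, Complex.normSq (F i q) + Complex.normSq (v q)
          = ∑ j, Complex.normSq (F j q) := by
        simpa [hFi0 q] using hsplit
      linarith
    calc ∑ q, ∑ i ∈ Finset.univ.erase i0, Complex.normSq (F i q)
        ≤ ∑ q : Fin d2, (1 - Complex.normSq (v q)) := Finset.sum_le_sum fun q _ => hq q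
      _ = (d2 : ℝ) - 1 := by
        rw [Finset.sum_sub_distrib, hNv1]
        simp
  have hCbound : ∑ i ∈ Finset.univ.erase i0, ∑ x, Complex.normSq (G i x) ≤ (d1 : ℝ) - 1 := by
    rw [Finset.sum_comm]
    have hx : ∀ x, ∑ i ∈ Finset.univ.erase i0, Complex.normSq (G i x)
        ≤ 1 - Complex.normSq (u x) := by
      intro x
      have hsplit := Finset.sum_erase_add Finset.univ
        (fun j => Complex.normSq (G j x)) (Finset.mem_univ i0)
      have hb' := hbesC x
      have hsub : ∑ i ∈ Finset.univ.erase i0, Complex.normSq (G i x) + Complex.normSq (u x)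
          = ∑ j, Complex.normSq (G j x) := by
        simpa [hGi0 x] using hsplit
      linarith
    calc ∑ x, ∑ i ∈ Finset.univ.erase i0, Complex.normSq (G i x)
        ≤ ∑ x : Fin d1, (1 - Complex.normSq (u x)) := Finset.sum_le_sum fun x _ => hx x
      _ = (d1 : ℝ) - 1 := by
        rw [Finset.sum_sub_distrib, hNu1]
        simp
  -- combine
  have hcard : (Finset.univ.erase i0).card = d1 * d2 - 1 := by
    rw [Finset.card_erase_of_mem (Finset.mem_univ i0), Finset.card_univ, Fintype.card_fin]
  have hlow := Finset.card_nsmul_le_sum (Finset.univ.erase i0)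
    (fun i => (∑ q, Complex.normSq (F i q)) + (∑ x, Complex.normSq (G i x))) c key
  rw [hcard, nsmul_eq_mul] at hlow
  have hup : ∑ i ∈ Finset.univ.erase i0,
      ((∑ q, Complex.normSq (F i q)) + (∑ x, Complex.normSq (G i x)))
      ≤ ((d2 : ℝ) - 1) + ((d1 : ℝ) - 1) := by
    rw [Finset.sum_add_distrib]
    exact add_le_add hRbound hCbound
  have hcast : ((d1 * d2 - 1 : ℕ) : ℝ) = (d1 : ℝ) * (d2 : ℝ) - 1 := by
    have h4 : 1 ≤ d1 * d2 := Nat.one_le_of_lt (show 0 < d1 * d2 by nlinarith)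
    push_cast [Nat.cast_sub h4]
    ring
  rw [hcast] at hlow
  have hfinal : c * ((d1 : ℝ) * (d2 : ℝ) - 1) ≤ ((d2 : ℝ) - 1) + ((d1 : ℝ) - 1) := by
    calc c * ((d1 : ℝ) * (d2 : ℝ) - 1) = ((d1 : ℝ) * (d2 : ℝ) - 1) * c := mul_comm _ _
      _ ≤ _ := le_trans hlow hup
  -- arithmetic contradiction
  have hD1 : (2 : ℝ) ≤ (d1 : ℝ) := by exact_mod_cast hd1
  have hD2 : (2 : ℝ) ≤ (d2 : ℝ) := by exact_mod_cast hd2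
  set w := Real.sqrt (1 + 2 * lam) with hwdef
  have hw2 : w ^ 2 = 1 + 2 * lam := Real.sq_sqrt (by linarith)
  have hw1 : 1 < w := by nlinarith [Real.sqrt_nonneg (1 + 2 * lam)]
  have hwlt : w < 2 := by nlinarith [Real.sqrt_nonneg (1 + 2 * lam)]
  have h1w : (0 : ℝ) < 1 + w := by linarith
  rw [hc] at hfinal
  rw [div_mul_eq_mul_div, div_le_iff₀ h1w] at hfinal
  nlinarith [mul_nonneg (sub_nonneg.2 hD1) (sub_nonneg.2 hD2),
    mul_le_mul_of_nonneg_left hwlt.le (by linarith : (0:ℝ) ≤ (d1:ℝ) + (d2:ℝ) - 2)]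
end
end

section
/- Let d ≥ 4, λ ∈ (0,1), and let a_i, b_i ∈ C for i = 2,...,d satisfy λ|a_i|^2 ≥ |b_i|^2/2. Suppose u^{(i)}_{12}, u^{(i)}_{21}, u^{(i)}_{22} ∈ C for i = 2,...,d satisfy: (1) for each i, a_i·u^{(i)}_{22} = b_i·u^{(i)}_{12}·u^{(i)}_{21}; (2) Σ_{i=2}^d |u^{(i)}_{22}|^2 = 1; (3) Σ_{i=2}^d |u^{(i)}_{12}|^2 ≤ 1 and Σ_{i=2}^d |u^{(i)}_{21}|^2 ≤ 1; (4) |u^{(i)}_{12}|^2 + |u^{(i)}_{21}|^2 ≤ 1 for each i. Then a contradiction follows, i.e., no such family exists. -/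
noncomputable section

open Finset

/-- The core numerical contradiction: the index type `Fin (d-1)` stands for the indices
`i = 2, …, d` (with `d ≥ 4`, so there are `d - 1 ≥ 3` of them). -/
theorem stmt5 (d : ℕ) (hd : 4 ≤ d) (lam : ℝ) (hlam0 : 0 < lam) (hlam1 : lam < 1)
    (a b u12 u21 u22 : Fin (d - 1) → ℂ)
    (hb : ∀ i, b i ≠ 0)
    (hab : ∀ i, ‖b i‖ ^ 2 / 2 ≤ lam * ‖a i‖ ^ 2)
    (h1 : ∀ i, a i * u22 i = b i * u12 i * u21 i)
    (h2 : ∑ i : Fin (d - 1), ‖u22 i‖ ^ 2 = 1)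
    (h3 : ∑ i : Fin (d - 1), ‖u12 i‖ ^ 2 ≤ 1)
    (h3' : ∑ i : Fin (d - 1), ‖u21 i‖ ^ 2 ≤ 1)
    (h4 : ∀ i, ‖u12 i‖ ^ 2 + ‖u21 i‖ ^ 2 ≤ 1) :
    False := by
  have key : ∀ i, ‖u22 i‖ ^ 2 ≤
      lam * (‖u12 i‖ ^ 2 + ‖u21 i‖ ^ 2) / 2 := by
    intro i
    have hbpos : 0 < ‖b i‖ := by
      simpa using (norm_pos_iff.mpr (hb i))
    have hapos : 0 < ‖a i‖ := by
      rcases lt_or_eq_of_le (norm_nonneg (a i)) with h | h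
      · exact h
      · exfalso
        have := hab i
        rw [← h] at this
        nlinarith
    have he : ‖a i‖ * ‖u22 i‖ =
        ‖b i‖ * ‖u12 i‖ * ‖u21 i‖ := by
      have := congrArg norm (h1 i)
      simpa [map_mul] using this
    have hxy : ‖u12 i‖ ^ 2 * ‖u21 i‖ ^ 2 ≤
        (‖u12 i‖ ^ 2 + ‖u21 i‖ ^ 2) / 4 := by
      nlinarith [h4 i, sq_nonneg (‖u12 i‖ ^ 2 - ‖u21 i‖ ^ 2),
        norm_nonneg (u12 i), norm_nonneg (u21 i),
        sq_nonneg (‖u12 i‖), sq_nonneg (‖u21 i‖)]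
    have he2 : ‖a i‖ ^ 2 * ‖u22 i‖ ^ 2 =
        ‖b i‖ ^ 2 * (‖u12 i‖ ^ 2 * ‖u21 i‖ ^ 2) := by
      have := congrArg (· ^ 2) he
      simp only [mul_pow] at this
      linarith
    have hb2 : ‖b i‖ ^ 2 ≤ 2 * lam * ‖a i‖ ^ 2 := by
      have := hab i; linarith
    -- |u22|^2 ≤ 2 λ x y
    have h5 : ‖u22 i‖ ^ 2 ≤
        2 * lam * (‖u12 i‖ ^ 2 * ‖u21 i‖ ^ 2) := by
      have ha2 : 0 < ‖a i‖ ^ 2 := by positivity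
      have xynn : 0 ≤ ‖u12 i‖ ^ 2 * ‖u21 i‖ ^ 2 := by positivity
      nlinarith [he2, mul_nonneg (sub_nonneg.2 hb2) xynn, ha2]
    nlinarith
  have hsum := Finset.sum_le_sum (s := Finset.univ) (fun i _ => key i)
  rw [h2] at hsum
  have : ∑ i : Fin (d - 1), lam * (‖u12 i‖ ^ 2 + ‖u21 i‖ ^ 2) / 2
      = lam / 2 * ((∑ i : Fin (d - 1), ‖u12 i‖ ^ 2)
        + ∑ i : Fin (d - 1), ‖u21 i‖ ^ 2) := by
    rw [mul_add, Finset.mul_sum, Finset.mul_sum, ← Finset.sum_add_distrib]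
    exact Finset.sum_congr rfl (fun i _ => by ring)
  rw [this] at hsum
  nlinarith
end
end

section
/- In C^2 ⊗ C^2, any set of three mutually orthonormal product vectors can be extended by exactly one more unit vector (unique up to global phase) to an orthonormal basis, and this fourth vector is necessarily also a product vector. -/
noncomputable section

open scoped ComplexConjugate

def dot2 (x y : Fin 2 → ℂ) : ℂ := conj (x 0) * y 0 + conj (x 1) * y 1

def perp2 (x : Fin 2 → ℂ) : Fin 2 → ℂ := ![-(conj (x 1)), conj (x 0)]

def tensor2 (u v : Fin 2 → ℂ) : EuclideanSpace ℂ (Fin 2 × Fin 2) :=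
  WithLp.toLp 2 (fun p : Fin 2 × Fin 2 => u p.1 * v p.2)

lemma dot2_conj (x y : Fin 2 → ℂ) : dot2 y x = conj (dot2 x y) := by
  simp [dot2, map_add, map_mul, mul_comm]

lemma dot2_flip {x y : Fin 2 → ℂ} (h : dot2 x y = 0) : dot2 y x = 0 := by
  rw [dot2_conj, h, map_zero]

lemma dot2_perp (x : Fin 2 → ℂ) : dot2 x (perp2 x) = 0 := by
  simp [dot2, perp2]; ring

lemma perp2_ne_zero {x : Fin 2 → ℂ} (hx : x ≠ 0) : perp2 x ≠ 0 := by
  intro h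
  apply hx
  funext i
  have h0 : perp2 x 0 = 0 := by rw [h]; rfl
  have h1 : perp2 x 1 = 0 := by rw [h]; rfl
  simp [perp2] at h0 h1
  fin_cases i <;> simp [h0, h1]

lemma inner_tensor2 (u v a b : Fin 2 → ℂ) :
    (inner ℂ (tensor2 u v) (tensor2 a b) : ℂ) = dot2 u a * dot2 v b := by
  simp [tensor2, PiLp.inner_apply, RCLike.inner_apply, Fintype.sum_prod_type,
    Fin.sum_univ_two, dot2, map_mul]
  ring

theorem stmt6 (ψ : Fin 3 → EuclideanSpace ℂ (Fin 2 × Fin 2))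
    (hON : Orthonormal ℂ ψ)
    (hprod : ∀ i, ProdVec 2 2 (ψ i)) :
    ∃ φ : EuclideanSpace ℂ (Fin 2 × Fin 2),
      ‖φ‖ = 1 ∧ (∀ i, inner ℂ (ψ i) φ = (0 : ℂ)) ∧ ProdVec 2 2 φ ∧
      ∀ φ' : EuclideanSpace ℂ (Fin 2 × Fin 2),
        ‖φ'‖ = 1 → (∀ i, inner ℂ (ψ i) φ' = (0 : ℂ)) →
          ∃ c : ℂ, ‖c‖ = 1 ∧ φ' = c • φ := by
  classical
  choose u v huv using hprod
  have hts : ∀ i, ψ i = tensor2 (u i) (v i) := by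
    intro i; ext p; exact huv i p
  have hψne : ∀ i, ψ i ≠ 0 := by
    intro i h
    have h1 := hON.1 i
    rw [h] at h1; simp at h1
  have huvne : ∀ i, u i ≠ 0 ∧ v i ≠ 0 := by
    intro i
    obtain ⟨p, hp⟩ := Function.ne_iff.mp (fun h => hψne i (WithLp.ofLp_injective 2 h))
    rw [huv i p] at hp
    constructor
    · intro h; apply hp; rw [h]; simp
    · intro h; apply hp; rw [h]; simp
  have hpair : ∀ i j, i ≠ j → dot2 (u i) (u j) = 0 ∨ dot2 (v i) (v j) = 0 := by
    intro i j hij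
    have h : (inner ℂ (ψ i) (ψ j) : ℂ) = 0 := hON.2 hij
    rw [hts i, hts j, inner_tensor2] at h
    exact mul_eq_zero.mp h
  -- reduce to finding a, b
  suffices h : ∃ a b : Fin 2 → ℂ, a ≠ 0 ∧ b ≠ 0 ∧ ∀ i, dot2 (u i) a * dot2 (v i) b = 0 by
    obtain ⟨a, b, ha, hb, hab⟩ := h
    obtain ⟨i0, hi0⟩ := Function.ne_iff.mp ha
    obtain ⟨j0, hj0⟩ := Function.ne_iff.mp hb
    set φ₀ : EuclideanSpace ℂ (Fin 2 × Fin 2) := tensor2 a b with hφ₀def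
    have hφ₀ : φ₀ ≠ 0 := by
      intro h
      have : φ₀ (i0, j0) = 0 := by rw [h]; rfl
      exact (mul_ne_zero hi0 hj0) this
    have hn : ‖φ₀‖ ≠ 0 := norm_ne_zero_iff.mpr hφ₀
    set c0 : ℂ := (‖φ₀‖ : ℂ)⁻¹ with hc0
    set φ : EuclideanSpace ℂ (Fin 2 × Fin 2) := c0 • φ₀ with hφdef
    have hφnorm : ‖φ‖ = 1 := by
      rw [hφdef, norm_smul, hc0, norm_inv, Complex.norm_real,
        Real.norm_eq_abs, abs_of_nonneg (norm_nonneg _)]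
      exact inv_mul_cancel₀ hn
    have horth : ∀ i, (inner ℂ (ψ i) φ : ℂ) = 0 := by
      intro i
      rw [hφdef, inner_smul_right, hts i, inner_tensor2, hab i, mul_zero]
    have hφprod : ProdVec 2 2 φ := by
      refine ⟨fun x => c0 * a x, b, fun p => ?_⟩
      show c0 * (a p.1 * b p.2) = c0 * a p.1 * b p.2
      ring
    refine ⟨φ, hφnorm, horth, hφprod, ?_⟩
    -- uniqueness
    intro φ' h1 h2
    have hφφ : (inner ℂ φ φ : ℂ) = 1 := by
      rw [inner_self_eq_norm_sq_to_K, hφnorm]; norm_num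
    have hφψ : ∀ i, (inner ℂ φ (ψ i) : ℂ) = 0 := fun i => by
      rw [← inner_conj_symm, horth i, map_zero]
    have hψψ := orthonormal_iff_ite.mp hON
    set e : Fin 4 → EuclideanSpace ℂ (Fin 2 × Fin 2) := ![ψ 0, ψ 1, ψ 2, φ] with he
    have hoe : Orthonormal ℂ e := by
      rw [orthonormal_iff_ite]
      intro i j
      fin_cases i <;> fin_cases j <;>
        simp [he, hψψ, horth, hφψ, hφφ, hON.1, hφnorm]
    have hspan : Submodule.span ℂ (Set.range e) = ⊤ :=
      hoe.linearIndependent.span_eq_top_of_card_eq_finrank (by simp)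
    set c : ℂ := inner ℂ φ φ' with hc
    set w : EuclideanSpace ℂ (Fin 2 × Fin 2) := φ' - c • φ with hw
    have hwk : ∀ k : Fin 4, (inner ℂ (e k) w : ℂ) = 0 := by
      intro k
      fin_cases k <;>
        simp [hw, he, inner_sub_right, inner_smul_right, h2, horth, hφφ, hc, hφnorm]
    have hw0 : w = 0 := by
      have hmem : w ∈ (Submodule.span ℂ (Set.range e))ᗮ := by
        rw [Submodule.mem_orthogonal]
        intro x hx
        induction hx using Submodule.span_induction with
        | mem x hx => obtain ⟨k, rfl⟩ := hx; exact hwk k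
        | zero => simp
        | add x y _ _ hx hy => rw [inner_add_left, hx, hy, add_zero]
        | smul c x _ hx => rw [inner_smul_left, hx, mul_zero]
      rw [hspan, Submodule.top_orthogonal_eq_bot] at hmem
      simpa using hmem
    have hφ' : φ' = c • φ := by rwa [sub_eq_zero] at hw0
    refine ⟨c, ?_, hφ'⟩
    have : ‖φ'‖ = ‖c‖ * ‖φ‖ := by rw [hφ', norm_smul]
    rw [h1, hφnorm, mul_one] at this
    exact this.symm
  -- case analysis
  have mku : ∀ k : Fin 3, (∀ i, i ≠ k → dot2 (u i) (u k) = 0) →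
      ∃ a b : Fin 2 → ℂ, a ≠ 0 ∧ b ≠ 0 ∧ ∀ i, dot2 (u i) a * dot2 (v i) b = 0 := by
    intro k hk
    refine ⟨u k, perp2 (v k), (huvne k).1, perp2_ne_zero (huvne k).2, fun i => ?_⟩
    by_cases h : i = k
    · subst h; rw [dot2_perp, mul_zero]
    · rw [hk i h, zero_mul]
  have mkv : ∀ k : Fin 3, (∀ i, i ≠ k → dot2 (v i) (v k) = 0) →
      ∃ a b : Fin 2 → ℂ, a ≠ 0 ∧ b ≠ 0 ∧ ∀ i, dot2 (u i) a * dot2 (v i) b = 0 := by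
    intro k hk
    refine ⟨perp2 (u k), v k, perp2_ne_zero (huvne k).1, (huvne k).2, fun i => ?_⟩
    by_cases h : i = k
    · subst h; rw [dot2_perp, zero_mul]
    · rw [hk i h, mul_zero]
  rcases hpair 0 1 (by decide) with h01 | h01 <;>
    rcases hpair 0 2 (by decide) with h02 | h02 <;>
      rcases hpair 1 2 (by decide) with h12 | h12
  · refine mku 0 ?_
    intro i hi
    fin_cases i
    · exact absurd rfl hi
    · exact dot2_flip h01
    · exact dot2_flip h02
  · refine mku 0 ?_
    intro i hi
    fin_cases i
    · exact absurd rfl hi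
    · exact dot2_flip h01
    · exact dot2_flip h02
  · refine mku 1 ?_
    intro i hi
    fin_cases i
    · exact h01
    · exact absurd rfl hi
    · exact dot2_flip h12
  · refine mkv 2 ?_
    intro i hi
    fin_cases i
    · exact h02
    · exact h12
    · exact absurd rfl hi
  · refine mku 2 ?_
    intro i hi
    fin_cases i
    · exact h02
    · exact h12
    · exact absurd rfl hi
  · refine mkv 1 ?_
    intro i hi
    fin_cases i
    · exact h01
    · exact absurd rfl hi
    · exact dot2_flip h12
  · refine mkv 0 ?_
    intro i hi
    fin_cases i
    · exact absurd rfl hi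
    · exact dot2_flip h01
    · exact dot2_flip h02
  · refine mkv 0 ?_
    intro i hi
    fin_cases i
    · exact absurd rfl hi
    · exact dot2_flip h01
    · exact dot2_flip h02
end
end

section
/- Every orthonormal product basis of C^2 ⊗ C^2 has (up to swapping the two tensor factors and reordering) the form {α⊗β, α^⊥⊗γ, α⊗β^⊥, α^⊥⊗γ^⊥}, where {α, α^⊥} is an orthonormal basis of the first C^2 and {β, β^⊥}, {γ, γ^⊥} are orthonormal bases of the second C^2. -/
open scoped InnerProductSpace

noncomputable section

namespace Stmt7Aux

local notation "conj'" => starRingEnd ℂ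

lemma unit_ne_zero (a : EuclideanSpace ℂ (Fin 2)) (h : ⟪a, a⟫_ℂ = 1) : a ≠ 0 := by
  intro h0; rw [h0, inner_zero_left] at h; exact zero_ne_one h

lemma prop_parallel (a b c : EuclideanSpace ℂ (Fin 2)) (ha : a ≠ 0)
    (hb : ⟪a, b⟫_ℂ = 0) (hc : ⟪a, c⟫_ℂ = 0) (hbne : b ≠ 0) :
    ∃ t : ℂ, c = t • b := by
  simp only [PiLp.inner_apply, RCLike.inner_apply, Fin.sum_univ_two] at hb hc
  have ha' : conj' (a 0) ≠ 0 ∨ conj' (a 1) ≠ 0 := by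
    by_contra h; push_neg at h
    apply ha; ext x; fin_cases x <;>
      simpa using (map_eq_zero (conj')).mp (by tauto)
  have hb' : b 0 ≠ 0 ∨ b 1 ≠ 0 := by
    by_contra h; push_neg at h
    apply hbne; ext x; fin_cases x <;> simp [h.1, h.2]
  have hD : b 0 * c 1 - b 1 * c 0 = 0 := by
    rcases ha' with h | h
    · have e1 : conj' (a 0) * (b 0 * c 1 - b 1 * c 0) = 0 := by
        linear_combination c 1 * hb - b 1 * hc
      exact (mul_eq_zero.mp e1).resolve_left h
    · have e1 : conj' (a 1) * (b 0 * c 1 - b 1 * c 0) = 0 := by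
        linear_combination b 0 * hc - c 0 * hb
      exact (mul_eq_zero.mp e1).resolve_left h
  rcases hb' with h | h
  · refine ⟨c 0 / b 0, ?_⟩
    ext x; fin_cases x
    · simp [PiLp.smul_apply, smul_eq_mul]; field_simp
    · simp [PiLp.smul_apply, smul_eq_mul]; field_simp; linear_combination hD
  · refine ⟨c 1 / b 1, ?_⟩
    ext x; fin_cases x
    · simp [PiLp.smul_apply, smul_eq_mul]; field_simp; linear_combination -hD
    · simp [PiLp.smul_apply, smul_eq_mul]; field_simp

lemma on_pair (x y : EuclideanSpace ℂ (Fin 2)) (hx : ⟪x, x⟫_ℂ = 1)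
    (hy : ⟪y, y⟫_ℂ = 1) (hxy : ⟪x, y⟫_ℂ = 0) : Orthonormal ℂ ![x, y] := by
  have hyx : ⟪y, x⟫_ℂ = 0 := by rw [← inner_conj_symm, hxy, map_zero]
  have hx' : ‖x‖ = 1 := by
    have h2 : ‖x‖ ^ 2 = 1 := by rw [← inner_self_eq_norm_sq (𝕜 := ℂ) x, hx]; simp
    nlinarith [norm_nonneg x]
  have hy' : ‖y‖ = 1 := by
    have h2 : ‖y‖ ^ 2 = 1 := by rw [← inner_self_eq_norm_sq (𝕜 := ℂ) y, hy]; simp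
    nlinarith [norm_nonneg y]
  rw [orthonormal_iff_ite]
  intro i j
  fin_cases i <;> fin_cases j <;> simp [hx, hy, hxy, hyx, hx', hy']

lemma inner_prod (u v u' v' : EuclideanSpace ℂ (Fin 2))
    (ψ φ : EuclideanSpace ℂ (Fin 2 × Fin 2))
    (hψ : ∀ p : Fin 2 × Fin 2, ψ p = u p.1 * v p.2)
    (hφ : ∀ p : Fin 2 × Fin 2, φ p = u' p.1 * v' p.2) :
    ⟪ψ, φ⟫_ℂ = ⟪u, u'⟫_ℂ * ⟪v, v'⟫_ℂ := by
  simp only [PiLp.inner_apply, RCLike.inner_apply, hψ, hφ, map_mul,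
    Fintype.sum_prod_type, Fin.sum_univ_two]
  ring

lemma normalizeProd (ψ : EuclideanSpace ℂ (Fin 2 × Fin 2)) (u v : Fin 2 → ℂ)
    (h : ∀ p : Fin 2 × Fin 2, ψ p = u p.1 * v p.2) (hn : ⟪ψ, ψ⟫_ℂ = 1) :
    ∃ a b : EuclideanSpace ℂ (Fin 2), ⟪a, a⟫_ℂ = 1 ∧ ⟪b, b⟫_ℂ = 1 ∧
      ∀ p : Fin 2 × Fin 2, ψ p = a p.1 * b p.2 := by
  set U : EuclideanSpace ℂ (Fin 2) := WithLp.toLp 2 u with hU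
  set V : EuclideanSpace ℂ (Fin 2) := WithLp.toLp 2 v with hV
  have key : ⟪U, U⟫_ℂ * ⟪V, V⟫_ℂ = 1 := by
    rw [← inner_prod U V U V ψ ψ h h]; exact hn
  have hUne : U ≠ 0 := by
    intro h0; rw [h0, inner_zero_left, zero_mul] at key; exact zero_ne_one key
  have hnorm : ⟪U, U⟫_ℂ = (‖U‖ : ℂ) ^ 2 := inner_self_eq_norm_sq_to_K U
  have hn0 : (‖U‖ : ℂ) ≠ 0 := by
    simpa using norm_ne_zero_iff.mpr hUne
  refine ⟨((‖U‖ : ℂ))⁻¹ • U, (‖U‖ : ℂ) • V, ?_, ?_, ?_⟩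
  · rw [inner_smul_left, inner_smul_right, hnorm]
    rw [map_inv₀, Complex.conj_ofReal]
    field_simp
  · rw [inner_smul_left, inner_smul_right, Complex.conj_ofReal]
    calc (‖U‖:ℂ) * ((‖U‖:ℂ) * ⟪V, V⟫_ℂ) = ⟪U,U⟫_ℂ * ⟪V,V⟫_ℂ := by
          rw [hnorm]; ring
      _ = 1 := key
  · intro p
    have : (((‖U‖ : ℂ))⁻¹ • U) p.1 * ((‖U‖ : ℂ) • V) p.2
        = ((‖U‖:ℂ)⁻¹ * (‖U‖:ℂ)) * (U p.1 * V p.2) := by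
      simp [PiLp.smul_apply, smul_eq_mul]; ring
    rw [this, inv_mul_cancel₀ hn0, one_mul]
    exact h p

lemma core (a b : Fin 4 → EuclideanSpace ℂ (Fin 2))
    (hau : ∀ m, ⟪a m, a m⟫_ℂ = 1) (hbu : ∀ m, ⟪b m, b m⟫_ℂ = 1)
    (horth : ∀ m n, m ≠ n → ⟪a m, a n⟫_ℂ * ⟪b m, b n⟫_ℂ = 0)
    (i j k : Fin 4) (h0k : (0 : Fin 4) ≠ k)
    (hij : i ≠ j) (hik : i ≠ k) (hjk : j ≠ k)
    (hi : ⟪a 0, a i⟫_ℂ = 0) (hj : ⟪a 0, a j⟫_ℂ = 0) :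
    ∃ α αp β βp γ γp : EuclideanSpace ℂ (Fin 2),
      Orthonormal ℂ ![α, αp] ∧ Orthonormal ℂ ![β, βp] ∧ Orthonormal ℂ ![γ, γp] ∧
      ∀ p : Fin 2 × Fin 2,
        a 0 p.1 * b 0 p.2 = α p.1 * β p.2 ∧
        a i p.1 * b i p.2 = αp p.1 * γ p.2 ∧
        a k p.1 * b k p.2 = α p.1 * βp p.2 ∧
        a j p.1 * b j p.2 = αp p.1 * γp p.2 := by
  obtain ⟨t, ht⟩ := prop_parallel (a 0) (a i) (a j) (unit_ne_zero _ (hau 0)) hi hj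
      (unit_ne_zero _ (hau i))
  have htt : conj' t * t = 1 := by
    have h1 := hau j
    rw [ht, inner_smul_left, inner_smul_right, hau i, mul_one] at h1
    exact h1
  have tne : t ≠ 0 := by
    intro h0; rw [h0, map_zero, zero_mul] at htt; exact zero_ne_one htt
  have hct : conj' t ≠ 0 := fun h => tne (by rw [← Complex.conj_conj t, h, map_zero])
  have haij : ⟪a i, a j⟫_ℂ = t := by rw [ht, inner_smul_right, hau i, mul_one]
  have hbij : ⟪b i, b j⟫_ℂ = 0 := by
    have := horth i j hij
    rw [haij] at this
    exact (mul_eq_zero.mp this).resolve_left tne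
  have hγp_unit : ⟪t • b j, t • b j⟫_ℂ = 1 := by
    rw [inner_smul_left, inner_smul_right, hbu j, mul_one]; exact htt
  have hγγp : ⟪b i, t • b j⟫_ℂ = 0 := by rw [inner_smul_right, hbij, mul_zero]
  have haik : ⟪a i, a k⟫_ℂ = 0 := by
    by_contra hne
    have hbik : ⟪b i, b k⟫_ℂ = 0 := (mul_eq_zero.mp (horth i k hik)).resolve_left hne
    have hajk : ⟪a j, a k⟫_ℂ ≠ 0 := by
      rw [ht, inner_smul_left]; exact mul_ne_zero hct hne
    have hbjk : ⟪b j, b k⟫_ℂ = 0 := (mul_eq_zero.mp (horth j k hjk)).resolve_left hajk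
    obtain ⟨s, hs⟩ := prop_parallel (b i) (t • b j) (b k) (unit_ne_zero _ (hbu i))
      hγγp hbik (smul_ne_zero tne (unit_ne_zero _ (hbu j)))
    have hst : s * t = 0 := by
      have h2 : ⟪b j, b k⟫_ℂ = s * t * ⟪b j, b j⟫_ℂ := by
        rw [hs, inner_smul_right, inner_smul_right]; ring
      rw [hbjk, hbu j, mul_one] at h2
      exact h2.symm
    have hbk0 : b k = 0 := by rw [hs, smul_smul, hst, zero_smul]
    have := hbu k
    rw [hbk0, inner_zero_left] at this
    exact zero_ne_one this
  have hai0 : ⟪a i, a 0⟫_ℂ = 0 := by rw [← inner_conj_symm, hi, map_zero]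
  obtain ⟨s, hs⟩ := prop_parallel (a i) (a 0) (a k) (unit_ne_zero _ (hau i)) hai0 haik
      (unit_ne_zero _ (hau 0))
  have hss : conj' s * s = 1 := by
    have h1 := hau k
    rw [hs, inner_smul_left, inner_smul_right, hau 0, mul_one] at h1
    exact h1
  have sne : s ≠ 0 := by
    intro h0; rw [h0, map_zero, zero_mul] at hss; exact zero_ne_one hss
  have ha0k : ⟪a 0, a k⟫_ℂ = s := by rw [hs, inner_smul_right, hau 0, mul_one]
  have hb0k : ⟪b 0, b k⟫_ℂ = 0 := by
    have := horth 0 k h0k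
    rw [ha0k] at this
    exact (mul_eq_zero.mp this).resolve_left sne
  refine ⟨a 0, a i, b 0, s • b k, b i, t • b j,
    on_pair _ _ (hau 0) (hau i) hi,
    on_pair _ _ (hbu 0) (by rw [inner_smul_left, inner_smul_right, hbu k, mul_one]; exact hss)
      (by rw [inner_smul_right, hb0k, mul_zero]),
    on_pair _ _ (hbu i) hγp_unit hγγp, ?_⟩
  intro p
  refine ⟨rfl, rfl, ?_, ?_⟩
  · rw [hs]; simp only [PiLp.smul_apply, smul_eq_mul]; ring
  · rw [ht]; simp only [PiLp.smul_apply, smul_eq_mul]; ring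

def Concl (B : Fin 4 → EuclideanSpace ℂ (Fin 2 × Fin 2)) : Prop :=
  ∃ (σ : Equiv.Perm (Fin 4)) (α αp β βp γ γp : EuclideanSpace ℂ (Fin 2)),
    Orthonormal ℂ ![α, αp] ∧ Orthonormal ℂ ![β, βp] ∧ Orthonormal ℂ ![γ, γp] ∧
    ((∀ p : Fin 2 × Fin 2,
        B (σ 0) p = α p.1 * β p.2 ∧
        B (σ 1) p = αp p.1 * γ p.2 ∧
        B (σ 2) p = α p.1 * βp p.2 ∧
        B (σ 3) p = αp p.1 * γp p.2) ∨
     (∀ p : Fin 2 × Fin 2,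
        B (σ 0) p = α p.2 * β p.1 ∧
        B (σ 1) p = αp p.2 * γ p.1 ∧
        B (σ 2) p = α p.2 * βp p.1 ∧
        B (σ 3) p = αp p.2 * γp p.1))

lemma finishA (B : Fin 4 → EuclideanSpace ℂ (Fin 2 × Fin 2))
    (a b : Fin 4 → EuclideanSpace ℂ (Fin 2))
    (hab : ∀ m (p : Fin 2 × Fin 2), B m p = a m p.1 * b m p.2)
    (i j k : Fin 4) (σ : Equiv.Perm (Fin 4))
    (e0 : σ 0 = 0) (e1 : σ 1 = i) (e2 : σ 2 = k) (e3 : σ 3 = j)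
    (H : ∃ α αp β βp γ γp : EuclideanSpace ℂ (Fin 2),
      Orthonormal ℂ ![α, αp] ∧ Orthonormal ℂ ![β, βp] ∧ Orthonormal ℂ ![γ, γp] ∧
      ∀ p : Fin 2 × Fin 2,
        a 0 p.1 * b 0 p.2 = α p.1 * β p.2 ∧
        a i p.1 * b i p.2 = αp p.1 * γ p.2 ∧
        a k p.1 * b k p.2 = α p.1 * βp p.2 ∧
        a j p.1 * b j p.2 = αp p.1 * γp p.2) : Concl B := by
  obtain ⟨α, αp, β, βp, γ, γp, h1, h2, h3, hpt⟩ := H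
  exact ⟨σ, α, αp, β, βp, γ, γp, h1, h2, h3, Or.inl fun p =>
    ⟨by rw [e0, hab 0 p]; exact (hpt p).1,
     by rw [e1, hab i p]; exact (hpt p).2.1,
     by rw [e2, hab k p]; exact (hpt p).2.2.1,
     by rw [e3, hab j p]; exact (hpt p).2.2.2⟩⟩

lemma finishB (B : Fin 4 → EuclideanSpace ℂ (Fin 2 × Fin 2))
    (a b : Fin 4 → EuclideanSpace ℂ (Fin 2))
    (hab : ∀ m (p : Fin 2 × Fin 2), B m p = a m p.1 * b m p.2)
    (i j k : Fin 4) (σ : Equiv.Perm (Fin 4))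
    (e0 : σ 0 = 0) (e1 : σ 1 = i) (e2 : σ 2 = k) (e3 : σ 3 = j)
    (H : ∃ α αp β βp γ γp : EuclideanSpace ℂ (Fin 2),
      Orthonormal ℂ ![α, αp] ∧ Orthonormal ℂ ![β, βp] ∧ Orthonormal ℂ ![γ, γp] ∧
      ∀ p : Fin 2 × Fin 2,
        b 0 p.1 * a 0 p.2 = α p.1 * β p.2 ∧
        b i p.1 * a i p.2 = αp p.1 * γ p.2 ∧
        b k p.1 * a k p.2 = α p.1 * βp p.2 ∧
        b j p.1 * a j p.2 = αp p.1 * γp p.2) : Concl B := by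
  obtain ⟨α, αp, β, βp, γ, γp, h1, h2, h3, hpt⟩ := H
  exact ⟨σ, α, αp, β, βp, γ, γp, h1, h2, h3, Or.inr fun p =>
    ⟨by rw [e0, hab 0 p, mul_comm]; exact (hpt (p.2, p.1)).1,
     by rw [e1, hab i p, mul_comm]; exact (hpt (p.2, p.1)).2.1,
     by rw [e2, hab k p, mul_comm]; exact (hpt (p.2, p.1)).2.2.1,
     by rw [e3, hab j p, mul_comm]; exact (hpt (p.2, p.1)).2.2.2⟩⟩

def σA : Equiv.Perm (Fin 4) :=
  ⟨![0,1,3,2], ![0,1,3,2], by intro x; fin_cases x <;> rfl, by intro x; fin_cases x <;> rfl⟩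
def σB : Equiv.Perm (Fin 4) :=
  ⟨![0,1,2,3], ![0,1,2,3], by intro x; fin_cases x <;> rfl, by intro x; fin_cases x <;> rfl⟩
def σC : Equiv.Perm (Fin 4) :=
  ⟨![0,2,1,3], ![0,2,1,3], by intro x; fin_cases x <;> rfl, by intro x; fin_cases x <;> rfl⟩

end Stmt7Aux

open Stmt7Aux
theorem stmt7 (B : Fin 4 → EuclideanSpace ℂ (Fin 2 × Fin 2))
    (hON : Orthonormal ℂ B)
    (hprod : ∀ m, ProdVec 2 2 (B m)) :
    ∃ (σ : Equiv.Perm (Fin 4)) (α αp β βp γ γp : EuclideanSpace ℂ (Fin 2)),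
      Orthonormal ℂ ![α, αp] ∧ Orthonormal ℂ ![β, βp] ∧ Orthonormal ℂ ![γ, γp] ∧
      ((∀ p : Fin 2 × Fin 2,
          B (σ 0) p = α p.1 * β p.2 ∧
          B (σ 1) p = αp p.1 * γ p.2 ∧
          B (σ 2) p = α p.1 * βp p.2 ∧
          B (σ 3) p = αp p.1 * γp p.2) ∨
       -- the same form after swapping the two tensor factors
       (∀ p : Fin 2 × Fin 2,
          B (σ 0) p = α p.2 * β p.1 ∧
          B (σ 1) p = αp p.2 * γ p.1 ∧
          B (σ 2) p = α p.2 * βp p.1 ∧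
          B (σ 3) p = αp p.2 * γp p.1)) := by
  show Concl B
  choose u v huv using hprod
  have hBi : ∀ m n, ⟪B m, B n⟫_ℂ = if m = n then 1 else 0 := orthonormal_iff_ite.mp hON
  choose a b hau hbu hab using fun m =>
    normalizeProd (B m) (u m) (v m) (huv m) (by simpa using hBi m m)
  have horth : ∀ m n : Fin 4, m ≠ n → ⟪a m, a n⟫_ℂ * ⟪b m, b n⟫_ℂ = 0 := by
    intro m n h
    rw [← inner_prod (a m) (b m) (a n) (b n) (B m) (B n) (hab m) (hab n), hBi m n, if_neg h]
  have horth' : ∀ m n : Fin 4, m ≠ n → ⟪b m, b n⟫_ℂ * ⟪a m, a n⟫_ℂ = 0 := fun m n h =>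
    by rw [mul_comm]; exact horth m n h
  have hPQ : ∀ m : Fin 4, (0 : Fin 4) ≠ m → ⟪a 0, a m⟫_ℂ = 0 ∨ ⟪b 0, b m⟫_ℂ = 0 :=
    fun m h => mul_eq_zero.mp (horth 0 m h)
  by_cases hP1 : ⟪a 0, a 1⟫_ℂ = 0 <;> by_cases hP2 : ⟪a 0, a 2⟫_ℂ = 0 <;>
    by_cases hP3 : ⟪a 0, a 3⟫_ℂ = 0
  -- P1 P2 P3 : i=1 j=2 k=3
  · exact finishA B a b hab 1 2 3 σA rfl rfl rfl rfl
      (core a b hau hbu horth 1 2 3 (by decide) (by decide) (by decide) (by decide) hP1 hP2)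
  -- P1 P2 ¬P3
  · exact finishA B a b hab 1 2 3 σA rfl rfl rfl rfl
      (core a b hau hbu horth 1 2 3 (by decide) (by decide) (by decide) (by decide) hP1 hP2)
  -- P1 ¬P2 P3 : i=1 j=3 k=2
  · exact finishA B a b hab 1 3 2 σB rfl rfl rfl rfl
      (core a b hau hbu horth 1 3 2 (by decide) (by decide) (by decide) (by decide) hP1 hP3)
  -- P1 ¬P2 ¬P3 : Q2 Q3 : i=2 j=3 k=1
  · exact finishB B a b hab 2 3 1 σC rfl rfl rfl rfl
      (core b a hbu hau horth' 2 3 1 (by decide) (by decide) (by decide) (by decide)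
        ((hPQ 2 (by decide)).resolve_left hP2) ((hPQ 3 (by decide)).resolve_left hP3))
  -- ¬P1 P2 P3 : i=2 j=3 k=1
  · exact finishA B a b hab 2 3 1 σC rfl rfl rfl rfl
      (core a b hau hbu horth 2 3 1 (by decide) (by decide) (by decide) (by decide) hP2 hP3)
  -- ¬P1 P2 ¬P3 : Q1 Q3 : i=1 j=3 k=2
  · exact finishB B a b hab 1 3 2 σB rfl rfl rfl rfl
      (core b a hbu hau horth' 1 3 2 (by decide) (by decide) (by decide) (by decide)
        ((hPQ 1 (by decide)).resolve_left hP1) ((hPQ 3 (by decide)).resolve_left hP3))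
  -- ¬P1 ¬P2 P3 : Q1 Q2 : i=1 j=2 k=3
  · exact finishB B a b hab 1 2 3 σA rfl rfl rfl rfl
      (core b a hbu hau horth' 1 2 3 (by decide) (by decide) (by decide) (by decide)
        ((hPQ 1 (by decide)).resolve_left hP1) ((hPQ 2 (by decide)).resolve_left hP2))
  -- ¬P1 ¬P2 ¬P3 : Q1 Q2
  · exact finishB B a b hab 1 2 3 σA rfl rfl rfl rfl
      (core b a hbu hau horth' 1 2 3 (by decide) (by decide) (by decide) (by decide)
        ((hPQ 1 (by decide)).resolve_left hP1) ((hPQ 2 (by decide)).resolve_left hP2))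
end
end

section
/- Let H_A = C^2 and H_B = C^n. Every orthonormal product basis of H_A ⊗ H_B can be written as S = {a_k ⊗ u^{(k)}_i : 1 ≤ i ≤ n_k} ∪ {a_k^⊥ ⊗ v^{(k)}_i : 1 ≤ i ≤ n_k}, 1 ≤ k ≤ t, where for each k the pair {a_k, a_k^⊥} is an orthonormal basis of H_A, the families {u^{(k)}_i}_{i=1}^{n_k} and {v^{(k)}_i}_{i=1}^{n_k} are each orthonormal in H_B, span{u^{(k)}_i} = span{v^{(k)}_i} with common dimension n_k, and H_B is the orthogonal direct sum of the subspaces span{u^{(k)}_i} over k = 1,...,t. -/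
noncomputable section

namespace Stmt8Aux

open scoped ComplexConjugate

local notation "⟪" x ", " y "⟫" => @inner ℂ _ _ x y

variable {n : ℕ}

def tens (x : EuclideanSpace ℂ (Fin 2)) (y : EuclideanSpace ℂ (Fin n)) :
    EuclideanSpace ℂ (Fin 2 × Fin n) := WithLp.toLp 2 (fun p => x p.1 * y p.2)

lemma tens_apply (x : EuclideanSpace ℂ (Fin 2)) (y : EuclideanSpace ℂ (Fin n)) (p) :
    tens x y p = x p.1 * y p.2 := rfl

lemma inner_tens (x x' : EuclideanSpace ℂ (Fin 2)) (y y' : EuclideanSpace ℂ (Fin n)) :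
    ⟪tens x y, tens x' y'⟫ = ⟪x, x'⟫ * ⟪y, y'⟫ := by
  simp only [PiLp.inner_apply, RCLike.inner_apply, tens_apply]
  rw [Fintype.sum_prod_type, Finset.sum_mul_sum]
  refine Finset.sum_congr rfl fun i _ => Finset.sum_congr rfl fun j _ => ?_
  rw [map_mul]; ring

lemma tens_smul_right (c : ℂ) (x : EuclideanSpace ℂ (Fin 2)) (y : EuclideanSpace ℂ (Fin n)) :
    tens x (c • y) = c • tens x y := by
  ext p; simp [tens]; ring

lemma tens_smul_comm (c : ℂ) (x : EuclideanSpace ℂ (Fin 2)) (y : EuclideanSpace ℂ (Fin n)) :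
    tens (c • x) y = tens x (c • y) := by
  ext p; simp [tens]; ring

lemma tens_eq_zero {x : EuclideanSpace ℂ (Fin 2)} {y : EuclideanSpace ℂ (Fin n)}
    (hx : x ≠ 0) (h : tens x y = 0) : y = 0 := by
  obtain ⟨i, hi⟩ : ∃ i, x i ≠ 0 := by
    by_contra hc; push_neg at hc; exact hx (by ext i; simpa using hc i)
  ext j
  have := congrFun (congrArg WithLp.ofLp h) (i, j)
  simpa [tens, hi] using this

def perp (x : EuclideanSpace ℂ (Fin 2)) : EuclideanSpace ℂ (Fin 2) :=
  WithLp.toLp 2 (fun i => if i = 0 then conj (x 1) else - conj (x 0))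

lemma inner_two (x y : EuclideanSpace ℂ (Fin 2)) :
    ⟪x, y⟫ = conj (x 0) * y 0 + conj (x 1) * y 1 := by
  simp [PiLp.inner_apply, RCLike.inner_apply, Fin.sum_univ_two]; ring

lemma perp_zero (x : EuclideanSpace ℂ (Fin 2)) : perp x 0 = conj (x 1) := rfl

lemma perp_one (x : EuclideanSpace ℂ (Fin 2)) : perp x 1 = - conj (x 0) := rfl

lemma inner_perp_self (x : EuclideanSpace ℂ (Fin 2)) : ⟪x, perp x⟫ = 0 := by
  rw [inner_two, perp_zero, perp_one]; ring

lemma inner_perp_perp (x : EuclideanSpace ℂ (Fin 2)) : ⟪perp x, perp x⟫ = ⟪x, x⟫ := by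
  rw [inner_two, inner_two, perp_zero, perp_one]
  simp only [map_neg, Complex.conj_conj]
  ring

lemma exists_smul_perp {z x : EuclideanSpace ℂ (Fin 2)} (hz : z ≠ 0)
    (h : ⟪z, x⟫ = 0) : ∃ c : ℂ, x = c • perp z := by
  rw [inner_two] at h
  have hsmul : ∀ (c : ℂ) (i : Fin 2), (c • perp z) i = c * perp z i := fun c i => rfl
  by_cases h1 : z 1 = 0
  · have hz0 : z 0 ≠ 0 := by
      intro h0
      exact hz (by ext i; fin_cases i <;> simp [h0, h1])
    have hw0 : conj (z 0) ≠ 0 := by simpa using hz0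
    have hx0 : x 0 = 0 := by
      have h' : conj (z 0) * x 0 = 0 := by
        simpa [h1] using h
      exact (mul_eq_zero.mp h').resolve_left hw0
    refine ⟨x 1 / (- conj (z 0)), ?_⟩
    have e0 : x 0 = (x 1 / (- conj (z 0))) * perp z 0 := by
      rw [perp_zero]; simp [h1, hx0]
    have e1 : x 1 = (x 1 / (- conj (z 0))) * perp z 1 := by
      rw [perp_one]; field_simp
    ext i
    fin_cases i
    · exact e0.trans (hsmul _ 0).symm
    · exact e1.trans (hsmul _ 1).symm
  · have hw1 : conj (z 1) ≠ 0 := by simpa using h1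
    refine ⟨x 0 / conj (z 1), ?_⟩
    have e0 : x 0 = (x 0 / conj (z 1)) * perp z 0 := by
      rw [perp_zero]; field_simp
    have e1 : x 1 = (x 0 / conj (z 1)) * perp z 1 := by
      rw [perp_one]; field_simp; linear_combination h
    ext i
    fin_cases i
    · exact e0.trans (hsmul _ 0).symm
    · exact e1.trans (hsmul _ 1).symm


lemma inner_left_zero_of_span {E : Type*} [NormedAddCommGroup E] [InnerProductSpace ℂ E]
    {s : Set E} {x b : E} (hx : x ∈ Submodule.span ℂ s) (h : ∀ y ∈ s, ⟪y, b⟫ = 0) :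
    ⟪x, b⟫ = 0 := by
  induction hx using Submodule.span_induction with
  | mem y hy => exact h y hy
  | zero => simp
  | add y z _ _ hy hz => rw [inner_add_left, hy, hz, add_zero]
  | smul c y _ hy => rw [inner_smul_left, hy, mul_zero]

lemma eq_zero_of_forall_inner_eq {E : Type*} [NormedAddCommGroup E] [InnerProductSpace ℂ E]
    [FiniteDimensional ℂ E] {ι : Type*} [Fintype ι] {F : ι → E} (hON : Orthonormal ℂ F)
    (hcard : Fintype.card ι = Module.finrank ℂ E) {x : E} (hx : ∀ m, ⟪F m, x⟫ = 0) :
    x = 0 := by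
  have hspan : Submodule.span ℂ (Set.range F) = ⊤ :=
    Submodule.eq_top_of_finrank_eq
      (by rw [finrank_span_eq_card hON.linearIndependent, hcard])
  have hmem : x ∈ (Submodule.span ℂ (Set.range F))ᗮ := by
    rw [Submodule.mem_orthogonal]
    intro u hu
    exact inner_left_zero_of_span hu (by rintro y ⟨m, rfl⟩; exact hx m)
  rw [hspan, Submodule.top_orthogonal_eq_bot] at hmem
  simpa using hmem

end Stmt8Aux

open Stmt8Aux
open scoped ComplexConjugate

local notation "⟪" x ", " y "⟫" => @inner ℂ _ _ x y

/-- Feng's structure theorem for orthonormal product bases of `C^2 ⊗ C^n`. -/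
theorem stmt8 (n : ℕ) (hn : 1 ≤ n)
    (B : Fin (2 * n) → EuclideanSpace ℂ (Fin 2 × Fin n))
    (hON : Orthonormal ℂ B)
    (hprod : ∀ m, ProdVec 2 n (B m)) :
    ∃ (t : ℕ) (nk : Fin t → ℕ)
      (a ap : Fin t → EuclideanSpace ℂ (Fin 2))
      (u v : (k : Fin t) → Fin (nk k) → EuclideanSpace ℂ (Fin n))
      (e : ((k : Fin t) × (Fin (nk k) ⊕ Fin (nk k))) ≃ Fin (2 * n)),
      (∀ k, Orthonormal ℂ ![a k, ap k]) ∧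
      (∀ k, Orthonormal ℂ (u k)) ∧
      (∀ k, Orthonormal ℂ (v k)) ∧
      (∀ k, Submodule.span ℂ (Set.range (u k)) = Submodule.span ℂ (Set.range (v k))) ∧
      (∀ k, Module.finrank ℂ (Submodule.span ℂ (Set.range (u k))) = nk k) ∧
      -- H_B is the orthogonal direct sum of the subspaces span{u^{(k)}_i}
      (∀ k k', k ≠ k' → ∀ i i', inner ℂ (u k i) (u k' i') = (0 : ℂ)) ∧
      (⨆ k, Submodule.span ℂ (Set.range (u k))) = ⊤ ∧
      (∀ k i, ∀ p : Fin 2 × Fin n, B (e ⟨k, Sum.inl i⟩) p = a k p.1 * u k i p.2) ∧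
      (∀ k i, ∀ p : Fin 2 × Fin n, B (e ⟨k, Sum.inr i⟩) p = ap k p.1 * v k i p.2) := by
  classical
  have hO : ∀ i j, ⟪B i, B j⟫ = if i = j then (1:ℂ) else 0 := orthonormal_iff_ite.mp hON
  have hBB : ∀ m, ⟪B m, B m⟫ = 1 := fun m => by rw [hO]; simp
  -- Step 1: normalized product decomposition
  have hfact : ∀ m, ∃ (x : EuclideanSpace ℂ (Fin 2)) (y : EuclideanSpace ℂ (Fin n)),
      B m = tens x y ∧ ⟪x, x⟫ = 1 ∧ ⟪y, y⟫ = 1 := by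
    intro m
    obtain ⟨f, gg, hfg⟩ := hprod m
    set f' : EuclideanSpace ℂ (Fin 2) := WithLp.toLp 2 f with hf'
    set g' : EuclideanSpace ℂ (Fin n) := WithLp.toLp 2 gg with hg'
    have hBm : B m = tens f' g' := by ext p; exact hfg p
    have h1 : ⟪f', f'⟫ * ⟪g', g'⟫ = 1 := by rw [← inner_tens, ← hBm]; exact hBB m
    have hff0 : ⟪f', f'⟫ ≠ 0 := fun h => by rw [h, zero_mul] at h1; exact zero_ne_one h1
    have hf0 : f' ≠ 0 := inner_self_ne_zero.mp hff0
    set c : ℂ := (‖f'‖ : ℂ) with hc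
    have hc0 : c ≠ 0 := Complex.ofReal_ne_zero.mpr (norm_ne_zero_iff.mpr hf0)
    have hcconj : conj c = c := Complex.conj_ofReal _
    have hff : ⟪f', f'⟫ = c ^ 2 := inner_self_eq_norm_sq_to_K f'
    refine ⟨c⁻¹ • f', c • g', ?_, ?_, ?_⟩
    · rw [hBm]
      ext p
      show f' p.1 * g' p.2 = (c⁻¹ • f') p.1 * (c • g') p.2
      show f' p.1 * g' p.2 = (c⁻¹ * f' p.1) * (c * g' p.2)
      field_simp
    · rw [inner_smul_left, inner_smul_right, hff, map_inv₀, hcconj]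
      field_simp
    · rw [inner_smul_left, inner_smul_right, hcconj]
      rw [hff] at h1
      linear_combination h1
  choose aV bV hB ha hb using hfact
  have haV0 : ∀ m, aV m ≠ 0 := fun m => inner_self_ne_zero.mp (by rw [ha m]; exact one_ne_zero)
  have horth : ∀ m m', m ≠ m' → ⟪aV m, aV m'⟫ * ⟪bV m, bV m'⟫ = 0 := by
    intro m m' hmm'
    rw [← inner_tens, ← hB, ← hB, hO, if_neg hmm']
  -- Step 2: equivalence relation on indices
  let rel : Fin (2*n) → Fin (2*n) → Prop :=
    fun m m' => (∃ c : ℂ, aV m' = c • aV m) ∨ ⟪aV m, aV m'⟫ = 0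
  have hsmul_ne : ∀ {c : ℂ} {x y : EuclideanSpace ℂ (Fin 2)}, y ≠ 0 → y = c • x → c ≠ 0 := by
    intro c x y hy hyx hc0
    rw [hc0, zero_smul] at hyx
    exact hy hyx
  have relEquiv : Equivalence rel := by
    constructor
    · intro m; exact Or.inl ⟨1, (one_smul ℂ _).symm⟩
    · intro m m' h
      rcases h with ⟨c, hc⟩ | h
      · have hc0 : c ≠ 0 := hsmul_ne (haV0 m') hc
        exact Or.inl ⟨c⁻¹, by rw [hc, smul_smul, inv_mul_cancel₀ hc0, one_smul]⟩
      · exact Or.inr (inner_eq_zero_symm.mp h)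
    · intro m1 m2 m3 h12 h23
      rcases h12 with ⟨c, hc⟩ | h12
      · rcases h23 with ⟨d, hd⟩ | h23
        · exact Or.inl ⟨d * c, by rw [hd, hc, smul_smul]⟩
        · have hc0 : c ≠ 0 := hsmul_ne (haV0 m2) hc
          refine Or.inr ?_
          have : ⟪aV m2, aV m3⟫ = conj c * ⟪aV m1, aV m3⟫ := by rw [hc, inner_smul_left]
          rw [this] at h23
          rcases mul_eq_zero.mp h23 with h | h
          · exact absurd h (by simpa using hc0)
          · exact h
      · rcases h23 with ⟨d, hd⟩ | h23
        · exact Or.inr (by rw [hd, inner_smul_right, h12, mul_zero])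
        · -- both orthogonal to aV m2, dimension two
          obtain ⟨c1, hc1⟩ := exists_smul_perp (haV0 m2) (inner_eq_zero_symm.mp h12)
          obtain ⟨c3, hc3⟩ := exists_smul_perp (haV0 m2) h23
          have hc10 : c1 ≠ 0 := hsmul_ne (haV0 m1) hc1
          refine Or.inl ⟨c3 * c1⁻¹, ?_⟩
          rw [hc3, hc1, smul_smul, mul_assoc, inv_mul_cancel₀ hc10, mul_one]
  letI st : Setoid (Fin (2*n)) := ⟨rel, relEquiv⟩
  haveI : Fintype (Quotient st) := Fintype.ofFinite _
  set t := Fintype.card (Quotient st) with htdef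
  let ek : Fin t ≃ Quotient st := (Fintype.equivFin (Quotient st)).symm
  let g : Fin (2*n) → Fin t := fun m => ek.symm (Quotient.mk st m)
  let a : Fin t → EuclideanSpace ℂ (Fin 2) := fun k => aV (ek k).out
  let ap : Fin t → EuclideanSpace ℂ (Fin 2) := fun k => perp (a k)
  have ha_k : ∀ k, ⟪a k, a k⟫ = 1 := fun k => ha _
  have hap_k : ∀ k, ⟪ap k, ap k⟫ = 1 := fun k => (inner_perp_perp (a k)).trans (ha_k k)
  have ha_k0 : ∀ k, a k ≠ 0 := fun k => haV0 _
  have hap_k0 : ∀ k, ap k ≠ 0 := fun k => inner_self_ne_zero.mp (by rw [hap_k k]; exact one_ne_zero)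
  have hrel_g : ∀ m, rel ((ek (g m)).out) m := by
    intro m
    have h : Quotient.mk st ((ek (g m)).out) = Quotient.mk st m := by
      rw [Quotient.out_eq]
      show ek (ek.symm (Quotient.mk st m)) = Quotient.mk st m
      exact ek.apply_symm_apply _
    exact Quotient.exact h
  have hg_ne : ∀ m m', g m ≠ g m' → ¬ rel m m' := by
    intro m m' h hrel
    exact h (by show ek.symm (Quotient.mk st m) = ek.symm (Quotient.mk st m'); rw [Quotient.sound hrel])
  -- Step 3: normal form for each basis vector
  let pside : Fin (2*n) → Prop := fun m => ∃ c : ℂ, aV m = c • a (g m)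
  have hkey : ∀ m, ∃ c : ℂ, conj c * c = 1 ∧
      aV m = c • (if pside m then a (g m) else ap (g m)) := by
    intro m
    by_cases hp : pside m
    · obtain ⟨c, hc⟩ := id hp
      rw [if_pos hp]
      refine ⟨c, ?_, hc⟩
      have h1 := ha m
      rw [hc, inner_smul_left, inner_smul_right, ha_k, mul_one] at h1
      exact h1
    · have hperp : ⟪a (g m), aV m⟫ = 0 := (hrel_g m).resolve_left hp
      obtain ⟨c, hc⟩ := exists_smul_perp (ha_k0 (g m)) hperp
      rw [if_neg hp]
      refine ⟨c, ?_, hc⟩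
      have h1 := ha m
      rw [hc, inner_smul_left, inner_smul_right, hap_k, mul_one] at h1
      exact h1
  choose cV hcV hdec using hkey
  have hcV0 : ∀ m, cV m ≠ 0 := by
    intro m h
    have := hcV m
    rw [h, mul_zero] at this
    exact zero_ne_one this
  have hcVc0 : ∀ m, conj (cV m) ≠ 0 := by
    intro m h
    have := hcV m
    rw [h, zero_mul] at this
    exact zero_ne_one this
  let bb : Fin (2*n) → EuclideanSpace ℂ (Fin n) := fun m => cV m • bV m
  have haVp : ∀ m, pside m → aV m = cV m • a (g m) := fun m hp => by
    have := hdec m; rwa [if_pos hp] at this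
  have haVnp : ∀ m, ¬ pside m → aV m = cV m • ap (g m) := fun m hp => by
    have := hdec m; rwa [if_neg hp] at this
  have hBm_eq : ∀ m, B m = tens (if pside m then a (g m) else ap (g m)) (bb m) := by
    intro m
    rw [hB m, hdec m, tens_smul_comm]
  have hBp : ∀ m, pside m → B m = tens (a (g m)) (bb m) := fun m hp => by
    have := hBm_eq m; rwa [if_pos hp] at this
  have hBnp : ∀ m, ¬ pside m → B m = tens (ap (g m)) (bb m) := fun m hp => by
    have := hBm_eq m; rwa [if_neg hp] at this
  have hbb_self : ∀ m, ⟪bb m, bb m⟫ = 1 := by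
    intro m
    show ⟪cV m • bV m, cV m • bV m⟫ = 1
    rw [inner_smul_left, inner_smul_right, hb m, mul_one]
    exact hcV m
  have hbb_ne : ∀ m m', g m ≠ g m' → ⟪bb m, bb m'⟫ = 0 := by
    intro m m' h
    have hmm' : m ≠ m' := fun h' => h (by rw [h'])
    have haa : ⟪aV m, aV m'⟫ ≠ 0 := fun h0 => hg_ne m m' h (Or.inr h0)
    have hb0 : ⟪bV m, bV m'⟫ = 0 := (mul_eq_zero.mp (horth m m' hmm')).resolve_left haa
    show ⟪cV m • bV m, cV m' • bV m'⟫ = 0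
    rw [inner_smul_left, inner_smul_right, hb0, mul_zero, mul_zero]
  have haa_ne : ∀ m m' (w : EuclideanSpace ℂ (Fin 2)), ⟪w, w⟫ = 1 →
      aV m = cV m • w → aV m' = cV m' • w → ⟪aV m, aV m'⟫ ≠ 0 := by
    intro m m' w hw h1 h2
    rw [h1, h2, inner_smul_left, inner_smul_right, hw, mul_one]
    exact mul_ne_zero (hcVc0 m) (hcV0 m')
  have hbb_same : ∀ m m', m ≠ m' → g m = g m' → (pside m ↔ pside m') → ⟪bb m, bb m'⟫ = 0 := by
    intro m m' hne hg hiff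
    have haa : ⟪aV m, aV m'⟫ ≠ 0 := by
      by_cases hp : pside m
      · have h2 := haVp m' (hiff.mp hp)
        rw [← hg] at h2
        exact haa_ne m m' (a (g m)) (ha_k _) (haVp m hp) h2
      · have h2 := haVnp m' (fun hp' => hp (hiff.mpr hp'))
        rw [← hg] at h2
        exact haa_ne m m' (ap (g m)) (hap_k _) (haVnp m hp) h2
    have hb0 : ⟪bV m, bV m'⟫ = 0 := (mul_eq_zero.mp (horth m m' hne)).resolve_left haa
    show ⟪cV m • bV m, cV m' • bV m'⟫ = 0
    rw [inner_smul_left, inner_smul_right, hb0, mul_zero, mul_zero]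
  -- Step 4: the families and their spans
  let S : Fin t → Type := fun k => {m : Fin (2*n) // g m = k ∧ pside m}
  let T : Fin t → Type := fun k => {m : Fin (2*n) // g m = k ∧ ¬ pside m}
  have hu'on : ∀ k, Orthonormal ℂ (fun x : S k => bb x.1) := by
    intro k
    rw [orthonormal_iff_ite]
    intro i j
    by_cases hij : i = j
    · rw [hij, if_pos rfl]; exact hbb_self _
    · rw [if_neg hij]
      exact hbb_same i.1 j.1 (fun h => hij (Subtype.ext h)) (i.2.1.trans j.2.1.symm)
        (iff_of_true i.2.2 j.2.2)
  have hv'on : ∀ k, Orthonormal ℂ (fun x : T k => bb x.1) := by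
    intro k
    rw [orthonormal_iff_ite]
    intro i j
    by_cases hij : i = j
    · rw [hij, if_pos rfl]; exact hbb_self _
    · rw [if_neg hij]
      exact hbb_same i.1 j.1 (fun h => hij (Subtype.ext h)) (i.2.1.trans j.2.1.symm)
        (iff_of_false i.2.2 j.2.2)
  let U : Fin t → Submodule ℂ (EuclideanSpace ℂ (Fin n)) :=
    fun k => Submodule.span ℂ (Set.range (fun x : S k => bb x.1))
  let W : Fin t → Submodule ℂ (EuclideanSpace ℂ (Fin n)) :=
    fun k => Submodule.span ℂ (Set.range (fun x : T k => bb x.1))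
  -- B is a basis
  have hcard2n : Fintype.card (Fin (2*n)) = Module.finrank ℂ (EuclideanSpace ℂ (Fin 2 × Fin n)) := by
    simp [finrank_euclideanSpace]
  have hBtop : ∀ x : EuclideanSpace ℂ (Fin 2 × Fin n), (∀ m, ⟪B m, x⟫ = 0) → x = 0 :=
    fun x hx => eq_zero_of_forall_inner_eq hON hcard2n hx
  -- key annihilation lemmas
  have hAp : ∀ (k : Fin t) (b : EuclideanSpace ℂ (Fin n)),
      (∀ m, g m = k → pside m → ⟪bb m, b⟫ = 0) →
      (∀ m, g m ≠ k → ⟪bb m, b⟫ = 0) → b = 0 := by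
    intro k b h1 h2
    refine tens_eq_zero (ha_k0 k) (hBtop _ ?_)
    intro m
    by_cases hgm : g m = k
    · by_cases hp : pside m
      · rw [hBp m hp, inner_tens, h1 m hgm hp, mul_zero]
      · rw [hBnp m hp, inner_tens, hgm]
        rw [inner_eq_zero_symm.mp (inner_perp_self (a k)), zero_mul]
    · rw [hBm_eq m, inner_tens, h2 m hgm, mul_zero]
  have hAnp : ∀ (k : Fin t) (b : EuclideanSpace ℂ (Fin n)),
      (∀ m, g m = k → ¬ pside m → ⟪bb m, b⟫ = 0) →
      (∀ m, g m ≠ k → ⟪bb m, b⟫ = 0) → b = 0 := by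
    intro k b h1 h2
    refine tens_eq_zero (hap_k0 k) (hBtop _ ?_)
    intro m
    by_cases hgm : g m = k
    · by_cases hp : pside m
      · rw [hBp m hp, inner_tens, hgm, inner_perp_self, zero_mul]
      · rw [hBnp m hp, inner_tens, h1 m hgm hp, mul_zero]
    · rw [hBm_eq m, inner_tens, h2 m hgm, mul_zero]
  -- cross-class orthogonality at span level
  have hMcross : ∀ (k : Fin t) (m' : Fin (2*n)), g m' ≠ k →
      ∀ x ∈ U k ⊔ W k, ⟪bb m', x⟫ = 0 := by
    intro k m' hm' x hx
    rw [inner_eq_zero_symm]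
    rw [show U k ⊔ W k = Submodule.span ℂ
        (Set.range (fun x : S k => bb x.1) ∪ Set.range (fun x : T k => bb x.1)) from
      (Submodule.span_union _ _).symm] at hx
    refine inner_left_zero_of_span hx ?_
    rintro y (⟨i, rfl⟩ | ⟨i, rfl⟩)
    · exact hbb_ne i.1 m' (by rw [i.2.1]; exact Ne.symm hm')
    · exact hbb_ne i.1 m' (by rw [i.2.1]; exact Ne.symm hm')
  -- the two spans coincide
  have hWU : ∀ k, W k = U k := by
    intro k
    have h1 : W k ≤ U k := by
      intro x hx
      have hxM : x ∈ U k ⊔ W k := Submodule.mem_sup_right hx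
      have hprM : (Submodule.orthogonalProjectionOnto (U k) x : EuclideanSpace ℂ (Fin n)) ∈ U k ⊔ W k :=
        Submodule.mem_sup_left (Submodule.orthogonalProjectionOnto (U k) x).2
      have hres : x - Submodule.orthogonalProjectionOnto (U k) x ∈ (U k)ᗮ :=
        Submodule.sub_starProjection_mem_orthogonal x
      have hzero : x - (Submodule.orthogonalProjectionOnto (U k) x : EuclideanSpace ℂ (Fin n)) = 0 := by
        apply hAp k
        · intro m hg hp
          exact (Submodule.mem_orthogonal _ _).mp hres (bb m)
            (Submodule.subset_span ⟨⟨m, hg, hp⟩, rfl⟩)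
        · intro m hgm
          exact hMcross k m hgm _ (Submodule.sub_mem _ hxM hprM)
      have hx' : x = (Submodule.orthogonalProjectionOnto (U k) x : EuclideanSpace ℂ (Fin n)) :=
        sub_eq_zero.mp hzero
      rw [hx']
      exact (Submodule.orthogonalProjectionOnto (U k) x).2
    have h2 : U k ≤ W k := by
      intro x hx
      have hxM : x ∈ U k ⊔ W k := Submodule.mem_sup_left hx
      have hprM : (Submodule.orthogonalProjectionOnto (W k) x : EuclideanSpace ℂ (Fin n)) ∈ U k ⊔ W k :=
        Submodule.mem_sup_right (Submodule.orthogonalProjectionOnto (W k) x).2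
      have hres : x - Submodule.orthogonalProjectionOnto (W k) x ∈ (W k)ᗮ :=
        Submodule.sub_starProjection_mem_orthogonal x
      have hzero : x - (Submodule.orthogonalProjectionOnto (W k) x : EuclideanSpace ℂ (Fin n)) = 0 := by
        apply hAnp k
        · intro m hg hp
          exact (Submodule.mem_orthogonal _ _).mp hres (bb m)
            (Submodule.subset_span ⟨⟨m, hg, hp⟩, rfl⟩)
        · intro m hgm
          exact hMcross k m hgm _ (Submodule.sub_mem _ hxM hprM)
      have hx' : x = (Submodule.orthogonalProjectionOnto (W k) x : EuclideanSpace ℂ (Fin n)) :=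
        sub_eq_zero.mp hzero
      rw [hx']
      exact (Submodule.orthogonalProjectionOnto (W k) x).2
    exact le_antisymm h1 h2
  have hcardST : ∀ k, Fintype.card (T k) = Fintype.card (S k) := by
    intro k
    have h1 : Module.finrank ℂ (U k) = Fintype.card (S k) :=
      finrank_span_eq_card (hu'on k).linearIndependent
    have h2 : Module.finrank ℂ (W k) = Fintype.card (T k) :=
      finrank_span_eq_card (hv'on k).linearIndependent
    rw [← h1, ← h2, hWU k]
  -- the supremum is everything
  have hmem_bbU : ∀ m, bb m ∈ U (g m) := by
    intro m
    by_cases hp : pside m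
    · exact Submodule.subset_span ⟨⟨m, rfl, hp⟩, rfl⟩
    · have : bb m ∈ W (g m) := Submodule.subset_span ⟨⟨m, rfl, hp⟩, rfl⟩
      rw [hWU (g m)] at this
      exact this
  have htop : (⨆ k, U k) = ⊤ := by
    rw [← Submodule.orthogonal_eq_bot_iff, Submodule.eq_bot_iff]
    intro b hb
    have hbU : ∀ m, ⟪bb m, b⟫ = 0 := fun m =>
      (Submodule.mem_orthogonal _ b).mp hb (bb m) (le_iSup U (g m) (hmem_bbU m))
    set e0 : EuclideanSpace ℂ (Fin 2) := WithLp.toLp 2 (fun _ => 1 : Fin 2 → ℂ) with he0def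
    have he0 : e0 ≠ 0 := fun h => one_ne_zero (congrFun (congrArg WithLp.ofLp h) 0)
    refine tens_eq_zero he0 (hBtop _ ?_)
    intro m
    rw [hBm_eq m, inner_tens, hbU m, mul_zero]
  -- Step 5: assemble the data
  let nk : Fin t → ℕ := fun k => Fintype.card (S k)
  let eS : (k : Fin t) → Fin (nk k) ≃ S k := fun k => (Fintype.equivFin (S k)).symm
  let eT : (k : Fin t) → Fin (nk k) ≃ T k := fun k => (Fintype.equivFinOfCardEq (hcardST k)).symm
  let u : (k : Fin t) → Fin (nk k) → EuclideanSpace ℂ (Fin n) := fun k i => bb (eS k i).1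
  let v : (k : Fin t) → Fin (nk k) → EuclideanSpace ℂ (Fin n) := fun k i => bb (eT k i).1
  have hrangeu : ∀ k, Set.range (u k) = Set.range (fun x : S k => bb x.1) := fun k =>
    Function.Surjective.range_comp (eS k).surjective (fun x : S k => bb x.1)
  have hrangev : ∀ k, Set.range (v k) = Set.range (fun x : T k => bb x.1) := fun k =>
    Function.Surjective.range_comp (eT k).surjective (fun x : T k => bb x.1)
  have hspanu : ∀ k, Submodule.span ℂ (Set.range (u k)) = U k := fun k => by
    rw [hrangeu k]
  have hspanv : ∀ k, Submodule.span ℂ (Set.range (v k)) = W k := fun k => by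
    rw [hrangev k]
  let e : ((k : Fin t) × (Fin (nk k) ⊕ Fin (nk k))) ≃ Fin (2 * n) :=
    (Equiv.sigmaCongrRight (fun k => Equiv.sumCongr (eS k) (eT k))).trans
      ((Equiv.sigmaCongrRight (fun k =>
        (Equiv.sumCongr
          (Equiv.subtypeSubtypeEquivSubtypeInter (fun m => g m = k) pside).symm
          (Equiv.subtypeSubtypeEquivSubtypeInter (fun m => g m = k) (fun m => ¬ pside m)).symm).trans
        (Equiv.sumCompl (fun x : {m : Fin (2*n) // g m = k} => pside x.1)))).trans
      (Equiv.sigmaFiberEquiv g))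
  have heL : ∀ k i, e ⟨k, Sum.inl i⟩ = (eS k i).1 := fun k i => rfl
  have heR : ∀ k i, e ⟨k, Sum.inr i⟩ = (eT k i).1 := fun k i => rfl
  refine ⟨t, nk, a, ap, u, v, e, ?_, ?_, ?_, ?_, ?_, ?_, ?_, ?_, ?_⟩
  · -- a, ap orthonormal
    intro k
    rw [orthonormal_iff_ite]
    intro i j
    fin_cases i <;> fin_cases j
    · simpa using ha_k k
    · simpa using inner_perp_self (a k)
    · simpa using inner_eq_zero_symm.mp (inner_perp_self (a k))
    · simpa using hap_k k
  · exact fun k => (hu'on k).comp _ (eS k).injective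
  · exact fun k => (hv'on k).comp _ (eT k).injective
  · intro k
    rw [hspanu k, hspanv k, hWU k]
  · intro k
    have := finrank_span_eq_card (((hu'on k).comp _ (eS k).injective)).linearIndependent
    simp only [Fintype.card_fin] at this; exact this
  · intro k k' hkk' i i'
    exact hbb_ne _ _ (by rw [(eS k i).2.1, (eS k' i').2.1]; exact hkk')
  · rw [show (⨆ k, Submodule.span ℂ (Set.range (u k))) = ⨆ k, U k from
      iSup_congr fun k => hspanu k]
    exact htop
  · intro k i p
    rw [heL, hB ((eS k i).1), tens_apply]
    have haV' := haVp (eS k i).1 (eS k i).2.2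
    rw [(eS k i).2.1] at haV'
    rw [haV']
    have h1 : (cV (eS k i).1 • a k) p.1 = cV (eS k i).1 * a k p.1 := rfl
    have h2 : u k i p.2 = cV (eS k i).1 * bV (eS k i).1 p.2 := rfl
    rw [h1, h2]
    ring
  · intro k i p
    rw [heR, hB ((eT k i).1), tens_apply]
    have haV' := haVnp (eT k i).1 (eT k i).2.2
    rw [(eT k i).2.1] at haV'
    rw [haV']
    have h1 : (cV (eT k i).1 • ap k) p.1 = cV (eT k i).1 * ap k p.1 := rfl
    have h2 : v k i p.2 = cV (eT k i).1 * bV (eT k i).1 p.2 := rfl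
    rw [h1, h2]
    ring
end
end

section
/- Let s ≥ 2 and p ≥ 7 be integers, and let h_1,...,h_s, g_1,...,g_s be 2s pairwise distinct positive integers. Then the polynomial f(X) = (Σ_{i=1}^s X^{3p^{h_i}})^2 · (Σ_{k=1}^s X^{2p^{g_k}}) · (Σ_{l=1}^s X^{4p^{g_l}}) − (Σ_{k=1}^s X^{3p^{g_k}})^2 · (Σ_{i=1}^s X^{2p^{h_i}}) · (Σ_{j=1}^s X^{4p^{h_j}}) is not the zero polynomial. -/
noncomputable section

open Polynomial Finset

set_option maxHeartbeats 1000000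
set_option linter.all false


lemma geo (p : ℕ) (hp : 1 ≤ p) (n : ℕ) :
    (p - 1) * (∑ x ∈ Finset.range n, p ^ x) + 1 = p ^ n := by
  induction n with
  | zero => simp
  | succ n ih =>
    rw [Finset.sum_range_succ, Nat.mul_add, pow_succ, Nat.sub_one_mul p (p ^ n)]
    have h1 : p ^ n ≤ p * p ^ n := Nat.le_mul_of_pos_left _ (by omega)
    have h2 : p ^ n * p = p * p ^ n := Nat.mul_comm _ _
    omega

lemma sum_lt_pow (p n : ℕ) (hp : 2 ≤ p) (t : Finset ℕ) (c : ℕ → ℕ)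
    (hc : ∀ x ∈ t, c x < p) (ht : ∀ x ∈ t, x < n) :
    (∑ x ∈ t, c x * p ^ x) < p ^ n := by
  have hsub : t ⊆ Finset.range n := fun x hx => Finset.mem_range.2 (ht x hx)
  have step1 : (∑ x ∈ t, c x * p ^ x) ≤ ∑ x ∈ t, (p - 1) * p ^ x := by
    apply Finset.sum_le_sum
    intro x hx
    exact Nat.mul_le_mul_right _ (by have := hc x hx; omega)
  have step2 : (∑ x ∈ t, (p - 1) * p ^ x) ≤ ∑ x ∈ Finset.range n, (p - 1) * p ^ x :=
    Finset.sum_le_sum_of_subset hsub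
  have step3 : (∑ x ∈ Finset.range n, (p - 1) * p ^ x) + 1 = p ^ n := by
    rw [← Finset.mul_sum]; exact geo p (by omega) n
  omega

lemma digit_eq (p : ℕ) (hp : 2 ≤ p) (t : Finset ℕ) (c : ℕ → ℕ)
    (hc : ∀ x ∈ t, c x < p) (n : ℕ) :
    (∑ x ∈ t, c x * p ^ x) / p ^ n % p = if n ∈ t then c n else 0 := by
  classical
  rw [← Finset.sum_filter_add_sum_filter_not t (· < n)]
  have hB : ∑ x ∈ t.filter (fun x => ¬ x < n), c x * p ^ x
      = p ^ n * ∑ x ∈ t.filter (fun x => ¬ x < n), c x * p ^ (x - n) := by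
    rw [Finset.mul_sum]
    refine Finset.sum_congr rfl fun x hx => ?_
    have hxn : n ≤ x := by have := (Finset.mem_filter.1 hx).2; omega
    have : p ^ x = p ^ n * p ^ (x - n) := by rw [← pow_add]; congr 1; omega
    rw [this]; ring
  rw [hB]
  have hA : ∑ x ∈ t.filter (· < n), c x * p ^ x < p ^ n :=
    sum_lt_pow p n hp _ c (fun x hx => hc x (Finset.mem_filter.1 hx).1)
      (fun x hx => (Finset.mem_filter.1 hx).2)
  rw [Nat.add_mul_div_left _ _ (pow_pos (by omega : 0 < p) n), Nat.div_eq_of_lt hA,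
    Nat.zero_add]
  -- now: (∑ x ∈ t.filter (¬ · < n), c x * p ^ (x - n)) % p = if n ∈ t then c n else 0
  have hsplit : t.filter (fun x => ¬ x < n)
      = (t.filter (fun x => x = n)) ∪ (t.filter (fun x => n < x)) := by
    ext x
    simp only [Finset.mem_filter, Finset.mem_union]
    constructor
    · rintro ⟨hx, hx2⟩; rcases Nat.lt_or_ge n x with h | h
      · exact Or.inr ⟨hx, h⟩
      · exact Or.inl ⟨hx, by omega⟩
    · rintro (⟨hx, hx2⟩ | ⟨hx, hx2⟩) <;> exact ⟨hx, by omega⟩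
  rw [hsplit, Finset.sum_union (by
    simp only [Finset.disjoint_filter]
    intro x hx hxe; omega)]
  have h1 : (∑ x ∈ t.filter (fun x => x = n), c x * p ^ (x - n))
      = if n ∈ t then c n else 0 := by
    rw [show (t.filter (fun x => x = n)) = t.filter (· = n) from rfl, Finset.filter_eq']
    split_ifs with h
    · simp
    · simp
  have h2 : ∃ U, (∑ x ∈ t.filter (fun x => n < x), c x * p ^ (x - n)) = p * U := by
    refine ⟨∑ x ∈ t.filter (fun x => n < x), c x * p ^ (x - n - 1), ?_⟩
    rw [Finset.mul_sum]
    refine Finset.sum_congr rfl fun x hx => ?_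
    have hxn : n < x := (Finset.mem_filter.1 hx).2
    have : p ^ (x - n) = p * p ^ (x - n - 1) := by
      rw [← pow_succ']; congr 1; omega
    rw [this]; ring
  obtain ⟨U, hU⟩ := h2
  rw [h1, hU, Nat.add_mul_mod_self_left]
  split_ifs with h
  · exact Nat.mod_eq_of_lt (hc n h)
  · simp

lemma rep4 (p : ℕ) (a b c d M : ℕ) (u v w z : ℕ)
    (ha : a < M) (hb : b < M) (hc : c < M) (hd : d < M) :
    u * p ^ a + v * p ^ b + w * p ^ c + z * p ^ d
      = ∑ x ∈ Finset.range M,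
        ((if x = a then u else 0) + (if x = b then v else 0) +
         (if x = c then w else 0) + (if x = d then z else 0)) * p ^ x := by
  simp only [add_mul, Finset.sum_add_distrib, ite_mul, zero_mul, Finset.sum_ite_eq',
    Finset.mem_range, ha, hb, hc, hd, if_true]

lemma digits_of_eq (p : ℕ) (hp : 2 ≤ p) (a b c d a' b' c' d' : ℕ) (u v w z u' v' w' z' : ℕ)
    (h1 : ∀ x, (if x = a then u else 0) + (if x = b then v else 0) +
        (if x = c then w else 0) + (if x = d then z else 0) < p)
    (h2 : ∀ x, (if x = a' then u' else 0) + (if x = b' then v' else 0) +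
        (if x = c' then w' else 0) + (if x = d' then z' else 0) < p)
    (heq : u * p ^ a + v * p ^ b + w * p ^ c + z * p ^ d
      = u' * p ^ a' + v' * p ^ b' + w' * p ^ c' + z' * p ^ d') :
    ∀ n, (if n = a then u else 0) + (if n = b then v else 0) +
        (if n = c then w else 0) + (if n = d then z else 0)
      = (if n = a' then u' else 0) + (if n = b' then v' else 0) +
        (if n = c' then w' else 0) + (if n = d' then z' else 0) := by
  intro n
  set M := a + b + c + d + a' + b' + c' + d' + n + 1 with hM
  rw [rep4 p a b c d M u v w z (by omega) (by omega) (by omega) (by omega),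
    rep4 p a' b' c' d' M u' v' w' z' (by omega) (by omega) (by omega) (by omega)] at heq
  have e1 := digit_eq p hp (Finset.range M) _ (fun x _ => h1 x) n
  have e2 := digit_eq p hp (Finset.range M) _ (fun x _ => h2 x) n
  rw [heq, e2] at e1
  rw [if_pos (Finset.mem_range.2 (by omega)), if_pos (Finset.mem_range.2 (by omega))] at e1
  exact e1.symm

lemma key1 (p : ℕ) (hp : 7 ≤ p) (a b c d A B C : ℕ)
    (hac : a ≠ c) (had : a ≠ d) (hbc : b ≠ c) (hbd : b ≠ d)
    (haB : a ≠ B) (haC : a ≠ C) (hbB : b ≠ B) (hbC : b ≠ C)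
    (hAc : A ≠ c) (hAd : A ≠ d) (haA : True) (hAB : A ≠ B) (hAC : A ≠ C) (hBC : B ≠ C)
    (heq : 3 * p ^ a + 3 * p ^ b + 2 * p ^ c + 4 * p ^ d
      = 6 * p ^ A + 2 * p ^ B + 4 * p ^ C) :
    a = b ∧ a = A ∧ c = B ∧ d = C := by
  have hd := digits_of_eq p (by omega) a b c d A B C 0 3 3 2 4 6 2 4 0
    (by intro x; split_ifs <;> omega)
    (by intro x; split_ifs <;> omega)
    (by simpa using heq)
  have d1 := hd a
  simp only [if_neg hac, if_neg had, if_neg haB, if_neg haC, ite_self, if_pos rfl,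
    add_zero, zero_add] at d1
  have hab : a = b := by split_ifs at d1 <;> omega
  have haA : a = A := by split_ifs at d1 <;> omega
  have d2 := hd c
  simp only [if_neg (Ne.symm hac), if_neg (Ne.symm hbc), if_neg (Ne.symm hAc), ite_self,
    if_pos rfl, add_zero, zero_add] at d2
  have hcB : c = B := by split_ifs at d2 <;> omega
  have d3 := hd d
  simp only [if_neg (Ne.symm had), if_neg (Ne.symm hbd), if_neg (Ne.symm hAd), ite_self,
    if_pos rfl, add_zero, zero_add] at d3
  have hdC : d = C := by split_ifs at d3 <;> omega
  exact ⟨hab, haA, hcB, hdC⟩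

lemma key2 (p : ℕ) (hp : 7 ≤ p) (a b c d A B C : ℕ)
    (hac : a ≠ c) (had : a ≠ d) (hbc : b ≠ c) (hbd : b ≠ d)
    (hBc : B ≠ c) (hBd : B ≠ d) (haA : a ≠ A) (hbA : b ≠ A)
    (hAB : A ≠ B) (hAC : A ≠ C) (hBC : B ≠ C) :
    3 * p ^ a + 3 * p ^ b + 2 * p ^ c + 4 * p ^ d
      ≠ 6 * p ^ A + 2 * p ^ B + 4 * p ^ C := by
  intro heq
  have hd := digits_of_eq p (by omega) a b c d A B C 0 3 3 2 4 6 2 4 0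
    (by intro x; split_ifs <;> omega)
    (by intro x; split_ifs <;> omega)
    (by simpa using heq)
  have d := hd B
  simp only [if_neg hBc, if_neg hBd, if_neg (Ne.symm hAB), if_neg hBC, ite_self,
    if_pos rfl, add_zero, zero_add] at d
  split_ifs at d <;> omega

lemma coeff_one {s : ℕ} (A B C : Fin s → ℕ) (e : ℕ) (i0 j0 k0 l0 : Fin s)
    (huniq : ∀ i j k l : Fin s, A i + A j + B k + C l = e →
      i = i0 ∧ j = j0 ∧ k = k0 ∧ l = l0)
    (hval : A i0 + A j0 + B k0 + C l0 = e) :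
    Polynomial.coeff ((∑ i : Fin s, (X : Polynomial ℤ) ^ A i) ^ 2 *
      (∑ k : Fin s, (X : Polynomial ℤ) ^ B k) *
      (∑ l : Fin s, (X : Polynomial ℤ) ^ C l)) e = 1 := by
  classical
  have expand : (∑ i : Fin s, (X : Polynomial ℤ) ^ A i) ^ 2 *
      (∑ k : Fin s, (X : Polynomial ℤ) ^ B k) *
      (∑ l : Fin s, (X : Polynomial ℤ) ^ C l)
      = ∑ l : Fin s, ∑ k : Fin s, ∑ j : Fin s, ∑ i : Fin s,
          (X : Polynomial ℤ) ^ (A i + A j + B k + C l) := by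
    rw [sq]
    simp only [Finset.sum_mul, Finset.mul_sum, ← pow_add]
  rw [expand]
  simp only [Polynomial.finset_sum_coeff, Polynomial.coeff_X_pow]
  have key : ∀ l k j i : Fin s,
      (if e = A i + A j + B k + C l then (1:ℤ) else 0)
      = if l = l0 then (if k = k0 then (if j = j0 then (if i = i0 then 1 else 0) else 0)
          else 0) else 0 := by
    intro l k j i
    by_cases hcond : e = A i + A j + B k + C l
    · obtain ⟨hi, hj, hk, hl⟩ := huniq i j k l hcond.symm
      rw [if_pos hcond, if_pos hl, if_pos hk, if_pos hj, if_pos hi]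
    · rw [if_neg hcond]
      split_ifs with h1 h2 h3 h4
      · exfalso; apply hcond; subst h1; subst h2; subst h3; subst h4; omega
      all_goals rfl
  simp only [key]
  simp

lemma coeff_zero {s : ℕ} (A B C : Fin s → ℕ) (e : ℕ)
    (hne : ∀ i j k l : Fin s, A i + A j + B k + C l ≠ e) :
    Polynomial.coeff ((∑ i : Fin s, (X : Polynomial ℤ) ^ A i) ^ 2 *
      (∑ k : Fin s, (X : Polynomial ℤ) ^ B k) *
      (∑ l : Fin s, (X : Polynomial ℤ) ^ C l)) e = 0 := by
  classical
  have expand : (∑ i : Fin s, (X : Polynomial ℤ) ^ A i) ^ 2 *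
      (∑ k : Fin s, (X : Polynomial ℤ) ^ B k) *
      (∑ l : Fin s, (X : Polynomial ℤ) ^ C l)
      = ∑ l : Fin s, ∑ k : Fin s, ∑ j : Fin s, ∑ i : Fin s,
          (X : Polynomial ℤ) ^ (A i + A j + B k + C l) := by
    rw [sq]
    simp only [Finset.sum_mul, Finset.mul_sum, ← pow_add]
  rw [expand]
  simp only [Polynomial.finset_sum_coeff, Polynomial.coeff_X_pow]
  refine Finset.sum_eq_zero fun l _ => Finset.sum_eq_zero fun k _ =>
    Finset.sum_eq_zero fun j _ => Finset.sum_eq_zero fun i _ => ?_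
  exact if_neg fun hh => hne i j k l hh.symm

theorem stmt9 (s p : ℕ) (hs : 2 ≤ s) (hp : 7 ≤ p)
    (h g : Fin s → ℕ)
    (hpos : ∀ i, 0 < h i) (gpos : ∀ i, 0 < g i)
    (hdist : Function.Injective (Sum.elim h g : Fin s ⊕ Fin s → ℕ)) :
    ((∑ i : Fin s, (X : Polynomial ℤ) ^ (3 * p ^ (h i))) ^ 2 *
        (∑ k : Fin s, (X : Polynomial ℤ) ^ (2 * p ^ (g k))) *
        (∑ l : Fin s, (X : Polynomial ℤ) ^ (4 * p ^ (g l))) -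
      (∑ k : Fin s, (X : Polynomial ℤ) ^ (3 * p ^ (g k))) ^ 2 *
        (∑ i : Fin s, (X : Polynomial ℤ) ^ (2 * p ^ (h i))) *
        (∑ j : Fin s, (X : Polynomial ℤ) ^ (4 * p ^ (h j)))) ≠ 0 := by
  classical
  have hinj : Function.Injective h := fun i j hij => by
    have := hdist (a₁ := Sum.inl i) (a₂ := Sum.inl j) (by simpa using hij)
    simpa using this
  have ginj : Function.Injective g := fun i j hij => by
    have := hdist (a₁ := Sum.inr i) (a₂ := Sum.inr j) (by simpa using hij)
    simpa using this
  have hg : ∀ i j, h i ≠ g j := fun i j hij => by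
    have := hdist (a₁ := Sum.inl i) (a₂ := Sum.inr j) (by simpa using hij)
    simp at this
  set i0 : Fin s := ⟨0, by omega⟩ with hi0def
  set i1 : Fin s := ⟨1, by omega⟩ with hi1def
  have h01 : g i0 ≠ g i1 := fun hcontra => by
    have := ginj hcontra
    rw [hi0def, hi1def, Fin.mk.injEq] at this
    omega
  set e : ℕ := 6 * p ^ h i0 + 2 * p ^ g i0 + 4 * p ^ g i1 with hedef
  have fact1 : ∀ i j k l : Fin s,
      3 * p ^ h i + 3 * p ^ h j + 2 * p ^ g k + 4 * p ^ g l = e →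
      i = i0 ∧ j = i0 ∧ k = i0 ∧ l = i1 := by
    intro i j k l heq
    obtain ⟨q1, q2, q3, q4⟩ := key1 p hp (h i) (h j) (g k) (g l) (h i0) (g i0) (g i1)
      (hg i k) (hg i l) (hg j k) (hg j l) (hg i i0) (hg i i1) (hg j i0) (hg j i1)
      (hg i0 k) (hg i0 l) trivial (hg i0 i0) (hg i0 i1) h01 (by rw [heq, hedef])
    exact ⟨hinj q2, hinj ((q1.symm).trans q2), ginj q3, ginj q4⟩
  have fact2 : ∀ i j k l : Fin s,
      3 * p ^ g k + 3 * p ^ g l + 2 * p ^ h i + 4 * p ^ h j ≠ e := by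
    intro i j k l heq
    exact key2 p hp (g k) (g l) (h i) (h j) (h i0) (g i0) (g i1)
      (Ne.symm (hg i k)) (Ne.symm (hg j k)) (Ne.symm (hg i l)) (Ne.symm (hg j l))
      (Ne.symm (hg i i0)) (Ne.symm (hg j i0)) (Ne.symm (hg i0 k)) (Ne.symm (hg i0 l))
      (hg i0 i0) (hg i0 i1) h01 (by rw [heq, hedef])
  have hP1 : Polynomial.coeff ((∑ i : Fin s, (X : Polynomial ℤ) ^ (3 * p ^ (h i))) ^ 2 *
        (∑ k : Fin s, (X : Polynomial ℤ) ^ (2 * p ^ (g k))) *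
        (∑ l : Fin s, (X : Polynomial ℤ) ^ (4 * p ^ (g l)))) e = 1 :=
    coeff_one (fun i => 3 * p ^ h i) (fun k => 2 * p ^ g k) (fun l => 4 * p ^ g l) e
      i0 i0 i0 i1 fact1 (by rw [hedef]; ring)
  have hP2 : Polynomial.coeff ((∑ k : Fin s, (X : Polynomial ℤ) ^ (3 * p ^ (g k))) ^ 2 *
        (∑ i : Fin s, (X : Polynomial ℤ) ^ (2 * p ^ (h i))) *
        (∑ j : Fin s, (X : Polynomial ℤ) ^ (4 * p ^ (h j)))) e = 0 :=
    coeff_zero (fun k => 3 * p ^ g k) (fun i => 2 * p ^ h i) (fun j => 4 * p ^ h j) e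
      (fun k l i j => fact2 i j k l)
  intro hzero
  have hco := congrArg (fun q => Polynomial.coeff q e) hzero
  simp only [Polynomial.coeff_sub, Polynomial.coeff_zero] at hco
  rw [hP1, hP2] at hco
  norm_num at hco
end
end

section
/- Let x ∈ (0,1) be a real number and let i, j, k, l be distinct positive integers, p ≥ 2 an integer. Suppose there exists a 2×2 unitary matrix V and phases θ_1, θ_2 such that the normalized row vector of (x^{p^k}, x^{p^l}) times V equals e^{iθ_1} times the normalized row vector of (x^{p^i}, x^{p^j}), and the normalized row vector of (x^{2p^k}, x^{2p^l}) times V equals e^{iθ_2} times the normalized row vector of (x^{2p^i}, x^{2p^j}). Then (x^{3p^k}+x^{3p^l})^2 · (x^{2p^i}+x^{2p^j}) · (x^{4p^i}+x^{4p^j}) = (x^{3p^i}+x^{3p^j})^2 · (x^{2p^k}+x^{2p^l}) · (x^{4p^k}+x^{4p^l}). -/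
noncomputable section

open Matrix

theorem stmt11 (x : ℝ) (hx : x ∈ Set.Ioo (0 : ℝ) 1)
    (p i j k l : ℕ) (hp : 2 ≤ p)
    (hipos : 0 < i) (hjpos : 0 < j) (hkpos : 0 < k) (hlpos : 0 < l)
    (hij : i ≠ j) (hik : i ≠ k) (hil : i ≠ l) (hjk : j ≠ k) (hjl : j ≠ l) (hkl : k ≠ l)
    (V : Matrix (Fin 2) (Fin 2) ℂ) (hV : V ∈ Matrix.unitaryGroup (Fin 2) ℂ)
    (θ1 θ2 : ℝ)
    (h1 : ((Real.sqrt (x ^ (2 * p ^ k) + x ^ (2 * p ^ l)) : ℂ))⁻¹ •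
        Matrix.vecMul ![((x : ℂ)) ^ (p ^ k), ((x : ℂ)) ^ (p ^ l)] V =
      Complex.exp (θ1 * Complex.I) •
        (((Real.sqrt (x ^ (2 * p ^ i) + x ^ (2 * p ^ j)) : ℂ))⁻¹ •
          ![((x : ℂ)) ^ (p ^ i), ((x : ℂ)) ^ (p ^ j)]))
    (h2 : ((Real.sqrt (x ^ (4 * p ^ k) + x ^ (4 * p ^ l)) : ℂ))⁻¹ •
        Matrix.vecMul ![((x : ℂ)) ^ (2 * p ^ k), ((x : ℂ)) ^ (2 * p ^ l)] V =
      Complex.exp (θ2 * Complex.I) •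
        (((Real.sqrt (x ^ (4 * p ^ i) + x ^ (4 * p ^ j)) : ℂ))⁻¹ •
          ![((x : ℂ)) ^ (2 * p ^ i), ((x : ℂ)) ^ (2 * p ^ j)])) :
    (x ^ (3 * p ^ k) + x ^ (3 * p ^ l)) ^ 2 *
        ((x ^ (2 * p ^ i) + x ^ (2 * p ^ j)) * (x ^ (4 * p ^ i) + x ^ (4 * p ^ j))) =
      (x ^ (3 * p ^ i) + x ^ (3 * p ^ j)) ^ 2 *
        ((x ^ (2 * p ^ k) + x ^ (2 * p ^ l)) * (x ^ (4 * p ^ k) + x ^ (4 * p ^ l))) := by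
  obtain ⟨hx0, hx1⟩ := hx
  have hpow : ∀ n : ℕ, (0:ℝ) < x ^ n := fun n => pow_pos hx0 n
  -- positive real quantities
  set sA : ℝ := Real.sqrt (x ^ (2 * p ^ k) + x ^ (2 * p ^ l)) with hsA
  set sB : ℝ := Real.sqrt (x ^ (4 * p ^ k) + x ^ (4 * p ^ l)) with hsB
  set rA : ℝ := Real.sqrt (x ^ (2 * p ^ i) + x ^ (2 * p ^ j)) with hrA
  set rB : ℝ := Real.sqrt (x ^ (4 * p ^ i) + x ^ (4 * p ^ j)) with hrB
  have hsA0 : 0 < sA := Real.sqrt_pos.mpr (by positivity)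
  have hsB0 : 0 < sB := Real.sqrt_pos.mpr (by positivity)
  have hrA0 : 0 < rA := Real.sqrt_pos.mpr (by positivity)
  have hrB0 : 0 < rB := Real.sqrt_pos.mpr (by positivity)
  set u : Fin 2 → ℂ := ![((x : ℂ)) ^ (p ^ k), ((x : ℂ)) ^ (p ^ l)] with hu
  set w : Fin 2 → ℂ := ![((x : ℂ)) ^ (2 * p ^ k), ((x : ℂ)) ^ (2 * p ^ l)] with hw
  set u' : Fin 2 → ℂ := ![((x : ℂ)) ^ (p ^ i), ((x : ℂ)) ^ (p ^ j)] with hu'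
  set w' : Fin 2 → ℂ := ![((x : ℂ)) ^ (2 * p ^ i), ((x : ℂ)) ^ (2 * p ^ j)] with hw'
  set e1 : ℂ := Complex.exp (θ1 * Complex.I) with he1
  set e2 : ℂ := Complex.exp (θ2 * Complex.I) with he2
  -- unitary invariance of the hermitian pairing
  have hVV : V * star V = 1 := Matrix.mem_unitaryGroup_iff.mp hV
  have key : (u ᵥ* V) ⬝ᵥ star (w ᵥ* V) = u ⬝ᵥ star w := by
    rw [Matrix.star_vecMul, Matrix.dotProduct_mulVec, Matrix.vecMul_vecMul,
      Matrix.star_eq_conjTranspose] at *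
    rw [hVV, Matrix.vecMul_one]
  -- recover the unnormalized rows from h1, h2
  have hA : u ᵥ* V = ((sA : ℂ) * e1 * (rA : ℂ)⁻¹) • u' := by
    have := congrArg (fun v => (sA : ℂ) • v) h1
    simpa [smul_smul, mul_inv_cancel₀ (by exact_mod_cast hsA0.ne' : (sA:ℂ) ≠ 0),
      mul_assoc, mul_comm, mul_left_comm] using this
  have hB : w ᵥ* V = ((sB : ℂ) * e2 * (rB : ℂ)⁻¹) • w' := by
    have := congrArg (fun v => (sB : ℂ) • v) h2
    simpa [smul_smul, mul_inv_cancel₀ (by exact_mod_cast hsB0.ne' : (sB:ℂ) ≠ 0),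
      mul_assoc, mul_comm, mul_left_comm] using this
  set Sk : ℝ := x ^ (3 * p ^ k) + x ^ (3 * p ^ l) with hSk
  set Si : ℝ := x ^ (3 * p ^ i) + x ^ (3 * p ^ j) with hSi
  have hSk0 : 0 < Sk := by positivity
  have hSi0 : 0 < Si := by positivity
  have hdotk : u ⬝ᵥ star w = (Sk : ℂ) := by
    have e1 : (x:ℂ) ^ (p ^ k) * (x:ℂ) ^ (2 * p ^ k) = (x:ℂ) ^ (3 * p ^ k) := by
      rw [← pow_add]; congr 1; ring
    have e2 : (x:ℂ) ^ (p ^ l) * (x:ℂ) ^ (2 * p ^ l) = (x:ℂ) ^ (3 * p ^ l) := by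
      rw [← pow_add]; congr 1; ring
    simp [hu, hw, hSk, dotProduct, Fin.sum_univ_two, Pi.star_apply,
      ← Complex.ofReal_pow, Complex.conj_ofReal, Complex.ofReal_add, Complex.ofReal_pow,
      e1, e2]
  have hdoti : u' ⬝ᵥ star w' = (Si : ℂ) := by
    have e1 : (x:ℂ) ^ (p ^ i) * (x:ℂ) ^ (2 * p ^ i) = (x:ℂ) ^ (3 * p ^ i) := by
      rw [← pow_add]; congr 1; ring
    have e2 : (x:ℂ) ^ (p ^ j) * (x:ℂ) ^ (2 * p ^ j) = (x:ℂ) ^ (3 * p ^ j) := by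
      rw [← pow_add]; congr 1; ring
    simp [hu', hw', hSi, dotProduct, Fin.sum_univ_two, Pi.star_apply,
      ← Complex.ofReal_pow, Complex.conj_ofReal, Complex.ofReal_add, Complex.ofReal_pow,
      e1, e2]
  rw [hA, hB] at key
  rw [smul_dotProduct, star_smul, dotProduct_smul, hdotk, hdoti] at key
  -- key : (sA*e1*rA⁻¹) * (star (sB*e2*rB⁻¹) * Si) = Sk
  have hckey := congrArg (‖·‖) key
  simp only [smul_eq_mul, norm_mul, Complex.norm_real, Real.norm_eq_abs, norm_inv, RCLike.star_def,
    Complex.norm_conj, he1, he2, Complex.norm_exp_ofReal_mul_I, one_mul, mul_one] at hckey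
  rw [abs_of_pos hsA0, abs_of_pos hsB0, abs_of_pos hrA0, abs_of_pos hrB0,
    abs_of_pos hSi0, abs_of_pos hSk0] at hckey
  -- hckey : sA * rA⁻¹ * (sB * rB⁻¹ * Si) = Sk  (roughly)
  have hmain : Sk * (rA * rB) = sA * sB * Si := by
    field_simp at hckey
    nlinarith [hckey, hrA0, hrB0]
  have hrAsq : rA ^ 2 = x ^ (2 * p ^ i) + x ^ (2 * p ^ j) := Real.sq_sqrt (by positivity)
  have hrBsq : rB ^ 2 = x ^ (4 * p ^ i) + x ^ (4 * p ^ j) := Real.sq_sqrt (by positivity)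
  have hsAsq : sA ^ 2 = x ^ (2 * p ^ k) + x ^ (2 * p ^ l) := Real.sq_sqrt (by positivity)
  have hsBsq : sB ^ 2 = x ^ (4 * p ^ k) + x ^ (4 * p ^ l) := Real.sq_sqrt (by positivity)
  calc Sk ^ 2 * ((x ^ (2*p^i) + x ^ (2*p^j)) * (x ^ (4*p^i) + x ^ (4*p^j)))
      = (Sk * (rA * rB)) ^ 2 := by rw [← hrAsq, ← hrBsq]; ring
    _ = (sA * sB * Si) ^ 2 := by rw [hmain]
    _ = Si ^ 2 * ((x ^ (2*p^k) + x ^ (2*p^l)) * (x ^ (4*p^k) + x ^ (4*p^l))) := by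
        rw [← hsAsq, ← hsBsq]; ring
end
end

section
/- Let n ≥ 2 and let x ∈ (0,1) be a real number. Let g_1,...,g_n and h_1,...,h_n be 2n distinct positive integers, p ≥ 2 an integer. Suppose there is an n×n unitary matrix W and phases φ_1, φ_2 with N([x^{p^{h_1}},...,x^{p^{h_n}}])·W = e^{iφ_1}·N([x^{p^{g_1}},...,x^{p^{g_n}}]) and N([x^{2p^{h_1}},...,x^{2p^{h_n}}])·W = e^{iφ_2}·N([x^{2p^{g_1}},...,x^{2p^{g_n}}]). Then (Σ_i x^{3p^{h_i}})^2 · (Σ_k x^{2p^{g_k}}) · (Σ_l x^{4p^{g_l}}) = (Σ_k x^{3p^{g_k}})^2 · (Σ_i x^{2p^{h_i}}) · (Σ_j x^{4p^{h_j}}). -/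
noncomputable section

open Matrix Finset

theorem stmt12 (n : ℕ) (hn : 2 ≤ n) (x : ℝ) (hx : x ∈ Set.Ioo (0 : ℝ) 1)
    (p : ℕ) (hp : 2 ≤ p)
    (h g : Fin n → ℕ)
    (hpos : ∀ i, 0 < h i) (gpos : ∀ i, 0 < g i)
    (hdist : Function.Injective (Sum.elim h g : Fin n ⊕ Fin n → ℕ))
    (W : Matrix (Fin n) (Fin n) ℂ) (hW : W ∈ Matrix.unitaryGroup (Fin n) ℂ)
    (φ1 φ2 : ℝ)
    (h1 : ((Real.sqrt (∑ i : Fin n, x ^ (2 * p ^ (h i))) : ℂ))⁻¹ •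
        Matrix.vecMul (fun i => ((x : ℂ)) ^ (p ^ (h i))) W =
      Complex.exp (φ1 * Complex.I) •
        (((Real.sqrt (∑ i : Fin n, x ^ (2 * p ^ (g i))) : ℂ))⁻¹ •
          fun i => ((x : ℂ)) ^ (p ^ (g i))))
    (h2 : ((Real.sqrt (∑ i : Fin n, x ^ (4 * p ^ (h i))) : ℂ))⁻¹ •
        Matrix.vecMul (fun i => ((x : ℂ)) ^ (2 * p ^ (h i))) W =
      Complex.exp (φ2 * Complex.I) •
        (((Real.sqrt (∑ i : Fin n, x ^ (4 * p ^ (g i))) : ℂ))⁻¹ •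
          fun i => ((x : ℂ)) ^ (2 * p ^ (g i)))) :
    (∑ i : Fin n, x ^ (3 * p ^ (h i))) ^ 2 *
        ((∑ k : Fin n, x ^ (2 * p ^ (g k))) * (∑ l : Fin n, x ^ (4 * p ^ (g l)))) =
      (∑ k : Fin n, x ^ (3 * p ^ (g k))) ^ 2 *
        ((∑ i : Fin n, x ^ (2 * p ^ (h i))) * (∑ j : Fin n, x ^ (4 * p ^ (h j)))) := by
  obtain ⟨hx0, hx1⟩ := hx
  have hn0 : 0 < n := by omega
  have hsum : ∀ f : Fin n → ℕ, 0 < ∑ i : Fin n, x ^ (f i) := fun f =>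
    Finset.sum_pos (fun i _ => pow_pos hx0 _) ⟨⟨0, hn0⟩, Finset.mem_univ _⟩
  have hWW : W * Wᴴ = 1 := by
    have := Matrix.mem_unitaryGroup_iff.mp hW
    simpa [Matrix.star_eq_conjTranspose] using this
  have key : ∀ u w : Fin n → ℂ, (Matrix.vecMul u W) ⬝ᵥ star (Matrix.vecMul w W) = u ⬝ᵥ star w := by
    intro u w
    rw [Matrix.star_vecMul, Matrix.dotProduct_mulVec, Matrix.vecMul_vecMul, hWW,
      Matrix.vecMul_one]
  have E := congrArg₂ (fun a b : Fin n → ℂ => a ⬝ᵥ star b) h1 h2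
  simp only [smul_dotProduct, dotProduct_smul, star_smul] at E
  rw [key] at E
  -- dot products are sums of real powers
  have hdp : ∀ f : Fin n → ℕ,
      ((fun i => ((x:ℂ)) ^ (p ^ (f i))) ⬝ᵥ star (fun i => ((x:ℂ)) ^ (2 * p ^ (f i)))) =
        ((∑ i : Fin n, x ^ (3 * p ^ (f i)) : ℝ) : ℂ) := by
    intro f
    simp only [dotProduct, Pi.star_apply, ← Complex.ofReal_pow, Complex.star_def,
      Complex.conj_ofReal, ← Complex.ofReal_mul, ← pow_add, Complex.ofReal_sum]
    congr 1
    ext i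
    congr 1
    ring
  rw [hdp h, hdp g] at E
  simp only [smul_eq_mul, Complex.star_def, Complex.conj_ofReal, map_inv₀] at E
  have E2 := congrArg (‖·‖) E
  simp only [norm_mul, norm_inv, Complex.norm_real, Real.norm_eq_abs, Complex.norm_exp_ofReal_mul_I,
    Complex.norm_conj, one_mul] at E2
  set Ah := ∑ i : Fin n, x ^ (2 * p ^ h i) with hAh
  set Bh := ∑ i : Fin n, x ^ (4 * p ^ h i) with hBh
  set Ag := ∑ i : Fin n, x ^ (2 * p ^ g i) with hAg
  set Bg := ∑ i : Fin n, x ^ (4 * p ^ g i) with hBg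
  set Sh := ∑ i : Fin n, x ^ (3 * p ^ h i) with hSh
  set Sg := ∑ i : Fin n, x ^ (3 * p ^ g i) with hSg
  have pAh : 0 < Ah := hsum _
  have pBh : 0 < Bh := hsum _
  have pAg : 0 < Ag := hsum _
  have pBg : 0 < Bg := hsum _
  have pSh : 0 < Sh := hsum _
  have pSg : 0 < Sg := hsum _
  have sAh := Real.sqrt_pos.mpr pAh
  have sBh := Real.sqrt_pos.mpr pBh
  have sAg := Real.sqrt_pos.mpr pAg
  have sBg := Real.sqrt_pos.mpr pBg
  rw [abs_of_pos pSh, abs_of_pos pSg] at E2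
  have e : Sh * (Real.sqrt Bg * Real.sqrt Ag) = Sg * (Real.sqrt Bh * Real.sqrt Ah) := by
    field_simp at E2
    rw [abs_of_pos sAh, abs_of_pos sBh, abs_of_pos sAg, abs_of_pos sBg] at E2
    linarith [E2]
  have e2 := congrArg (fun t => t ^ 2) e
  simp only [mul_pow, Real.sq_sqrt pAh.le, Real.sq_sqrt pBh.le, Real.sq_sqrt pAg.le,
    Real.sq_sqrt pBg.le] at e2
  nlinarith [e2]
end
end

section
/- Any set of d−1 mutually orthonormal product vectors in C^{d1} ⊗ C^{d2} (d = d1·d2) whose orthogonal complement is one-dimensional has the property that the unique (up to phase) unit vector orthogonal to all of them is itself a product vector; equivalently, there is no unextendible product basis of size d−1 in any bipartite system. -/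
noncomputable section

open ComplexConjugate Finset

local notation "⟪" x ", " y "⟫" => @inner ℂ _ _ x y

/-- Inner product on a Euclidean space as an explicit sum. -/
lemma euclid_inner_eq {κ : Type*} [Fintype κ] (x y : EuclideanSpace ℂ κ) :
    ⟪x, y⟫ = ∑ p, conj (x p) * y p := by
  simp [PiLp.inner_apply, RCLike.inner_apply]
  exact Finset.sum_congr rfl fun _ _ => mul_comm _ _

/-- Completeness relation for an orthonormal family of full cardinality. -/
lemma aux_complete {κ ι : Type*} [Fintype κ] [DecidableEq κ] [Fintype ι] [Nonempty ι]
    (f : ι → EuclideanSpace ℂ κ) (hf : Orthonormal ℂ f)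
    (hcard : Fintype.card ι = Fintype.card κ) (p q : κ) :
    (∑ i, f i p * conj (f i q)) = if p = q then 1 else 0 := by
  have hrank : Fintype.card ι = Module.finrank ℂ (EuclideanSpace ℂ κ) := by
    simpa using hcard
  have hspan : ⊤ ≤ Submodule.span ℂ (Set.range f) :=
    (hf.linearIndependent.span_eq_top_of_card_eq_finrank hrank).ge
  have h := (OrthonormalBasis.mk hf hspan).sum_inner_mul_inner
    (EuclideanSpace.single p (1 : ℂ)) (EuclideanSpace.single q (1 : ℂ))
  simp only [OrthonormalBasis.coe_mk, EuclideanSpace.inner_single_left,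
    EuclideanSpace.inner_single_right, map_one, one_mul] at h
  simpa [EuclideanSpace.single_apply, apply_ite, eq_comm] using h

/-- A normalized nonzero vector has unit self-inner-product. -/
lemma unit_inner {κ : Type*} [Fintype κ] (x : EuclideanSpace ℂ κ) (hx : x ≠ 0) :
    ⟪((‖x‖ : ℂ))⁻¹ • x, ((‖x‖ : ℂ))⁻¹ • x⟫ = 1 := by
  have hxn : ‖x‖ ≠ 0 := norm_ne_zero_iff.mpr hx
  have hc : (‖x‖ : ℂ) ≠ 0 := Complex.ofReal_ne_zero.mpr hxn
  rw [inner_smul_left, inner_smul_right, inner_self_eq_norm_sq_to_K]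
  rw [map_inv₀, Complex.conj_ofReal, sq]
  field_simp
  rfl

/-- Appending a unit vector orthogonal to an orthonormal family keeps orthonormality. -/
lemma aux_sum_on {κ : Type*} [Fintype κ] {n : ℕ} (f : Fin n → EuclideanSpace ℂ κ)
    (hf : Orthonormal ℂ f) (g : EuclideanSpace ℂ κ) (hgg : ⟪g, g⟫ = 1)
    (hfg : ∀ i, ⟪f i, g⟫ = 0) :
    Orthonormal ℂ (Sum.elim f (fun _ : Unit => g)) := by
  rw [orthonormal_iff_ite] at hf ⊢
  have hgf : ∀ i, ⟪g, f i⟫ = 0 := by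
    intro i
    rw [← inner_conj_symm, hfg i, map_zero]
  rintro (i | i) (j | j)
  · simpa using hf i j
  · simpa using hfg i
  · simpa using hgf j
  · rw [if_pos (congrArg Sum.inr (Subsingleton.elim i j))]
    exact hgg

/-- Inner products of coordinatewise product vectors factorize. -/
lemma aux_factor {d1 d2 : ℕ} (x y : EuclideanSpace ℂ (Fin d1 × Fin d2))
    (x1 x2 : Fin d1 → ℂ) (y1 y2 : Fin d2 → ℂ)
    (hx : ∀ p : Fin d1 × Fin d2, x p = x1 p.1 * y1 p.2)
    (hy : ∀ p : Fin d1 × Fin d2, y p = x2 p.1 * y2 p.2) :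
    ⟪x, y⟫ = (∑ j, conj (x1 j) * x2 j) * (∑ k, conj (y1 k) * y2 k) := by
  rw [euclid_inner_eq, Fintype.sum_prod_type, Finset.sum_mul_sum]
  refine Finset.sum_congr rfl fun a _ => Finset.sum_congr rfl fun b _ => ?_
  rw [hx (a, b), hy (a, b), map_mul]
  ring

/-- No unextendible product basis of size `d - 1`: any nonzero vector orthogonal to `d - 1`
mutually orthonormal product vectors in `C^{d1} ⊗ C^{d2}` is itself a product vector. -/
theorem stmt15 (d1 d2 : ℕ) (hd1 : 2 ≤ d1) (hd2 : 2 ≤ d2)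
    (ψ : Fin (d1 * d2 - 1) → EuclideanSpace ℂ (Fin d1 × Fin d2))
    (hON : Orthonormal ℂ ψ)
    (hprod : ∀ i, ProdVec d1 d2 (ψ i)) :
    ∀ φ : EuclideanSpace ℂ (Fin d1 × Fin d2),
      φ ≠ 0 → (∀ i, inner ℂ (ψ i) φ = (0 : ℂ)) → ProdVec d1 d2 φ := by
  classical
  intro φ hφ hortho
  have hdd : 4 ≤ d1 * d2 := le_trans (by norm_num) (Nat.mul_le_mul hd1 hd2)
  -- product decompositions
  choose u v huv using hprod
  -- normalized φ
  have hφn : ‖φ‖ ≠ 0 := norm_ne_zero_iff.mpr hφ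
  have hφc : (‖φ‖ : ℂ) ≠ 0 := Complex.ofReal_ne_zero.mpr hφn
  set Ψ : EuclideanSpace ℂ (Fin d1 × Fin d2) := ((‖φ‖ : ℂ))⁻¹ • φ with hΨdef
  have hΨapp : ∀ p, Ψ p = ((‖φ‖ : ℂ))⁻¹ * φ p := fun p => rfl
  have hΨΨ : ⟪Ψ, Ψ⟫ = 1 := unit_inner φ hφ
  have hψΨ : ∀ i, ⟪ψ i, Ψ⟫ = 0 := by
    intro i
    rw [hΨdef, inner_smul_right, hortho i, mul_zero]
  -- the partially conjugated family
  set ψt : Fin (d1 * d2 - 1) → EuclideanSpace ℂ (Fin d1 × Fin d2) :=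
    fun i => WithLp.toLp 2 (fun p : Fin d1 × Fin d2 => u i p.1 * conj (v i p.2)) with hψt
  have hψtapp : ∀ i (p : Fin d1 × Fin d2), ψt i p = u i p.1 * conj (v i p.2) :=
    fun i p => rfl
  -- orthonormality of the conjugated family
  have hONt : Orthonormal ℂ ψt := by
    rw [orthonormal_iff_ite] at hON ⊢
    intro i j
    have hij := hON i j
    rw [aux_factor (ψ i) (ψ j) (u i) (u j) (v i) (v j) (huv i) (huv j)] at hij
    have hconjfac : ⟪ψt i, ψt j⟫ =
        (∑ l, conj (u i l) * u j l) * conj (∑ k, conj (v i k) * v j k) := by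
      rw [aux_factor (ψt i) (ψt j) (u i) (u j) (fun k => conj (v i k))
        (fun k => conj (v j k)) (hψtapp i) (hψtapp j)]
      have hB : (∑ k, conj ((fun k => conj (v i k)) k) * (fun k => conj (v j k)) k)
          = conj (∑ k, conj (v i k) * v j k) := by
        rw [map_sum]
        exact Finset.sum_congr rfl fun k _ => (map_mul (starRingEnd ℂ) _ _).symm
      rw [hB]
    rw [hconjfac]
    by_cases h : i = j
    · subst h
      rw [if_pos rfl] at hij ⊢
      have hc := congrArg conj hij
      rw [map_mul, map_one] at hc
      have hA : conj (∑ l, conj (u i l) * u i l) = ∑ l, conj (u i l) * u i l := by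
        rw [map_sum]
        refine Finset.sum_congr rfl fun l _ => ?_
        rw [map_mul, Complex.conj_conj, mul_comm]
      rw [hA] at hc
      exact hc
    · simp only [if_neg h] at hij ⊢
      rcases mul_eq_zero.mp hij with h0 | h0
      · rw [h0, zero_mul]
      · rw [h0, map_zero, mul_zero]
  -- a unit vector orthogonal to the conjugated family
  obtain ⟨Φ0, hΦ0mem, hΦ0⟩ :
      ∃ x ∈ (Submodule.span ℂ (Set.range ψt))ᗮ, x ≠ 0 := by
    by_contra hcon
    push_neg at hcon
    have hbot : (Submodule.span ℂ (Set.range ψt))ᗮ = ⊥ := by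
      rw [Submodule.eq_bot_iff]
      exact fun x hx => hcon x hx
    have htop : Submodule.span ℂ (Set.range ψt) = ⊤ :=
      Submodule.orthogonal_eq_bot_iff.mp hbot
    have hle : Module.finrank ℂ (Submodule.span ℂ (Set.range ψt)) ≤ d1 * d2 - 1 := by
      refine le_trans (by simpa using finrank_span_le_card (R := ℂ) (Set.range ψt)) ?_
      simpa using Finset.card_image_le (s := (Finset.univ : Finset (Fin (d1 * d2 - 1))))
        (f := ψt)
    rw [htop] at hle
    simp only [finrank_top, finrank_euclideanSpace, Fintype.card_prod,
      Fintype.card_fin] at hle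
    omega
  set Φ : EuclideanSpace ℂ (Fin d1 × Fin d2) := ((‖Φ0‖ : ℂ))⁻¹ • Φ0 with hΦdef
  have hΦΦ : ⟪Φ, Φ⟫ = 1 := unit_inner Φ0 hΦ0
  have hψtΦ : ∀ i, ⟪ψt i, Φ⟫ = 0 := by
    intro i
    have h0 : ⟪ψt i, Φ0⟫ = 0 :=
      (Submodule.mem_orthogonal _ _).mp hΦ0mem (ψt i)
        (Submodule.subset_span (Set.mem_range_self i))
    rw [hΦdef, inner_smul_right, h0, mul_zero]
  -- completeness relations
  have hcard : Fintype.card (Fin (d1 * d2 - 1) ⊕ Unit)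
      = Fintype.card (Fin d1 × Fin d2) := by
    simp only [Fintype.card_sum, Fintype.card_fin, Fintype.card_unit,
      Fintype.card_prod]
    omega
  have keyA : ∀ p q : Fin d1 × Fin d2,
      (∑ i, ψ i p * conj (ψ i q)) + Ψ p * conj (Ψ q) = if p = q then 1 else 0 := by
    intro p q
    have := aux_complete (Sum.elim ψ (fun _ : Unit => Ψ))
      (aux_sum_on ψ hON Ψ hΨΨ hψΨ) hcard p q
    simpa [Fintype.sum_sum_type] using this
  have keyB : ∀ p q : Fin d1 × Fin d2,
      (∑ i, ψt i p * conj (ψt i q)) + Φ p * conj (Φ q) = if p = q then 1 else 0 := by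
    intro p q
    have := aux_complete (Sum.elim ψt (fun _ : Unit => Φ))
      (aux_sum_on ψt hONt Φ hΦΦ hψtΦ) hcard p q
    simpa [Fintype.sum_sum_type] using this
  -- the key pointwise identity (partial transpose trick)
  have star : ∀ (j j' : Fin d1) (k k' : Fin d2),
      Ψ (j, k') * conj (Ψ (j', k)) = Φ (j, k) * conj (Φ (j', k')) := by
    intro j j' k k'
    have h1 := keyA (j, k') (j', k)
    have h2 := keyB (j, k) (j', k')
    have hsum : (∑ i, ψ i (j, k') * conj (ψ i (j', k)))
        = ∑ i, ψt i (j, k) * conj (ψt i (j', k')) := by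
      refine Finset.sum_congr rfl fun i _ => ?_
      rw [huv i (j, k'), huv i (j', k), hψtapp i (j, k), hψtapp i (j', k')]
      simp only [map_mul, Complex.conj_conj]
      ring
    have hδ : (if ((j, k') : Fin d1 × Fin d2) = (j', k) then (1 : ℂ) else 0)
        = if ((j, k) : Fin d1 × Fin d2) = (j', k') then 1 else 0 := by
      by_cases hj : j = j' <;> by_cases hk : k = k' <;>
        simp [Prod.ext_iff, hj, hk, eq_comm]
    rw [hδ, ← h2, hsum] at h1
    exact add_left_cancel h1
  -- Φ is nonzero somewhere
  obtain ⟨p0, hp0⟩ : ∃ p, Φ p ≠ 0 := by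
    by_contra hcon
    push_neg at hcon
    have hz : Φ = 0 := by
      ext p
      exact hcon p
    rw [hz] at hΦΦ
    simp at hΦΦ
  obtain ⟨j0, k0⟩ := p0
  have hΨ0 : Ψ (j0, k0) ≠ 0 := by
    intro h0
    have hs := star j0 j0 k0 k0
    rw [h0, zero_mul] at hs
    rcases mul_eq_zero.mp hs.symm with h | h
    · exact hp0 h
    · exact hp0 (by simpa using h)
  -- conclude: φ is a product vector
  refine ⟨fun j => (‖φ‖ : ℂ) * Φ (j, k0) / conj (Ψ (j0, k0)),
    fun k => conj (Φ (j0, k)), ?_⟩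
  rintro ⟨j, k⟩
  have hstar := star j j0 k0 k
  have hφΨ : φ (j, k) = (‖φ‖ : ℂ) * Ψ (j, k) := by
    rw [hΨapp]
    field_simp
  have hc : conj (Ψ (j0, k0)) ≠ 0 := by
    simpa using hΨ0
  rw [hφΨ]
  field_simp
  linear_combination hstar
end
end

section
/- Let S = {ψ_1, ..., ψ_N} ⊆ C^d (d = d1·d2, 2 ≤ d1 ≤ d2) and suppose there exists an index i such that dim span(S \ {ψ_i}) = d2 and ψ_i has nonzero component in span(S \ {ψ_i})^⊥. Write ψ_i = ξ + β·η with ξ ∈ span(S\{ψ_i}), η a unit vector in the orthogonal complement, β ≠ 0. If ξ = 0, then there exists a unitary U ∈ U(d) mapping every element of S to a product vector in C^{d1} ⊗ C^{d2}. -/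
noncomputable section

/-- Case (i) of Proposition 1: `ψ i = β • η` with `η` a unit vector orthogonal to the span of
the remaining states, which spans a subspace of dimension `d2`. Then the whole set can be
unitarily mapped to product vectors. -/
theorem stmt18 (d1 d2 N : ℕ) (hd1 : 2 ≤ d1) (hd12 : d1 ≤ d2)
    (ψ : Fin N → EuclideanSpace ℂ (Fin d1 × Fin d2)) (i : Fin N)
    (hdim : Module.finrank ℂ (Submodule.span ℂ (ψ '' {j : Fin N | j ≠ i})) = d2)
    (η : EuclideanSpace ℂ (Fin d1 × Fin d2)) (β : ℂ)
    (hη : η ∈ (Submodule.span ℂ (ψ '' {j : Fin N | j ≠ i}))ᗮ)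
    (hηnorm : ‖η‖ = 1) (hβ : β ≠ 0)
    (hψi : ψ i = β • η) :
    ∃ U : EuclideanSpace ℂ (Fin d1 × Fin d2) ≃ₗᵢ[ℂ] EuclideanSpace ℂ (Fin d1 × Fin d2),
      ∀ j : Fin N, ProdVec d1 d2 (U (ψ j)) := by
  classical
  set V : Submodule ℂ (EuclideanSpace ℂ (Fin d1 × Fin d2)) :=
    Submodule.span ℂ (ψ '' {j : Fin N | j ≠ i}) with hV
  have hd2 : 0 < d2 := by omega
  set z0 : Fin d1 := ⟨0, by omega⟩
  set o1 : Fin d1 := ⟨1, by omega⟩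
  set z2 : Fin d2 := ⟨0, hd2⟩
  have hz0o1 : o1 ≠ z0 := by simp [z0, o1, Fin.ext_iff]
  -- orthonormal basis of V
  have hfr : Module.finrank ℂ V = d2 := hdim
  let b0 : OrthonormalBasis (Fin d2) ℂ V :=
    (stdOrthonormalBasis ℂ V).reindex (finCongr hfr)
  have hb0V : ∀ k, ((b0 k : EuclideanSpace ℂ (Fin d1 × Fin d2))) ∈ V := fun k => (b0 k).2
  have hb0norm : ∀ k, ‖(b0 k : EuclideanSpace ℂ (Fin d1 × Fin d2))‖ = 1 := fun k => by
    rw [Submodule.norm_coe]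
    exact b0.orthonormal.1 k
  have hb0inner : ∀ k l, k ≠ l →
      (inner ℂ ((b0 k : EuclideanSpace ℂ (Fin d1 × Fin d2)))
        ((b0 l : EuclideanSpace ℂ (Fin d1 × Fin d2))) : ℂ) = 0 := by
    intro k l hkl
    exact b0.orthonormal.2 hkl
  have hb0η : ∀ k,
      (inner ℂ ((b0 k : EuclideanSpace ℂ (Fin d1 × Fin d2))) η : ℂ) = 0 := fun k =>
    (Submodule.mem_orthogonal V η).1 hη _ (hb0V k)
  -- the partial family to extend
  set v : Fin d1 × Fin d2 → EuclideanSpace ℂ (Fin d1 × Fin d2) :=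
    fun p => if p.1 = z0 then (b0 p.2 : EuclideanSpace ℂ (Fin d1 × Fin d2)) else η with hv
  set s : Set (Fin d1 × Fin d2) := {p | p.1 = z0} ∪ {(o1, z2)} with hs
  have hvval : ∀ p ∈ s, v p = if p.1 = z0 then (b0 p.2 : EuclideanSpace ℂ (Fin d1 × Fin d2)) else η :=
    fun p _ => rfl
  have horth : Orthonormal ℂ (s.restrict v) := by
    constructor
    · rintro ⟨p, hp⟩
      simp only [Set.restrict_apply, Set.restrict, hv]
      by_cases h : p.1 = z0 <;> simp [h, hb0norm, hηnorm]
    · rintro ⟨p, hp⟩ ⟨q, hq⟩ hpq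
      have hpq' : p ≠ q := by
        intro h; exact hpq (Subtype.ext h)
      simp only [Set.restrict_apply, Set.restrict, hv]
      by_cases h1 : p.1 = z0 <;> by_cases h2 : q.1 = z0 <;> simp only [h1, h2, if_true, if_false,
        if_pos, if_neg]
      · -- both in the z0 row
        have : p.2 ≠ q.2 := by
          intro h; exact hpq' (Prod.ext (h1.trans h2.symm) h)
        exact hb0inner _ _ this
      · exact hb0η p.2
      · rw [← inner_conj_symm, hb0η q.2, map_zero]
      · -- both must equal (o1, z2), contradiction
        exfalso
        have hp' : p = (o1, z2) := by
          rcases hp with hp | hp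
          · exact absurd hp h1
          · simpa using hp
        have hq' : q = (o1, z2) := by
          rcases hq with hq | hq
          · exact absurd hq h2
          · simpa using hq
        exact hpq' (hp'.trans hq'.symm)
  have hcard : Module.finrank ℂ (EuclideanSpace ℂ (Fin d1 × Fin d2)) =
      Fintype.card (Fin d1 × Fin d2) := by
    simp [finrank_euclideanSpace]
  obtain ⟨b, hb⟩ := horth.exists_orthonormalBasis_extension_of_card_eq hcard
  have hbz0 : ∀ k : Fin d2, b (z0, k) = (b0 k : EuclideanSpace ℂ (Fin d1 × Fin d2)) := by
    intro k
    have : (z0, k) ∈ s := Or.inl rfl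
    rw [hb _ this]; simp [hv]
  have hbη : b (o1, z2) = η := by
    have : (o1, z2) ∈ s := Or.inr rfl
    rw [hb _ this]; simp [hv, hz0o1]
  -- V is the span of the b0 vectors
  have hVspan : V = Submodule.span ℂ
      (Set.range (fun k => (b0 k : EuclideanSpace ℂ (Fin d1 × Fin d2)))) := by
    have h1 : Submodule.map V.subtype ⊤ = V := by
      simp [Submodule.map_top, Submodule.range_subtype]
    conv_lhs => rw [← h1, ← b0.toBasis.span_eq, Submodule.map_span]
    congr 1
    ext x
    simp [Set.range_comp]
  -- key: b p ⊥ V for p.1 ≠ z0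
  have hkey : ∀ p : Fin d1 × Fin d2, p.1 ≠ z0 → ∀ x ∈ V, (inner ℂ (b p) x : ℂ) = 0 := by
    intro p hp x hx
    have hgen : ∀ k : Fin d2, (inner ℂ (b p) ((b0 k : EuclideanSpace ℂ (Fin d1 × Fin d2))) : ℂ) = 0 := by
      intro k
      rw [← hbz0 k]
      exact b.orthonormal.2 (by intro h; exact hp (by rw [h]))
    rw [hVspan] at hx
    induction hx using Submodule.span_induction with
    | mem x hx => obtain ⟨k, rfl⟩ := hx; exact hgen k
    | zero => simp
    | add x y _ _ hx hy => rw [inner_add_right, hx, hy, add_zero]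
    | smul c x _ hx => rw [inner_smul_right, hx, mul_zero]
  refine ⟨b.repr, fun j => ?_⟩
  by_cases hji : j = i
  · -- ψ i = β • η maps to β • e_{(o1,z2)}
    subst hji
    refine ⟨fun a => if a = o1 then β else 0, fun k => if k = z2 then 1 else 0, ?_⟩
    intro p
    have : b.repr (ψ j) = β • EuclideanSpace.single (o1, z2) (1 : ℂ) := by
      rw [hψi, map_smul, ← hbη, b.repr_self]
    rw [this]
    obtain ⟨a, k⟩ := p
    simp only [PiLp.smul_apply, EuclideanSpace.single_apply, smul_eq_mul]
    by_cases ha : a = o1 <;> by_cases hk : k = z2 <;>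
      simp [ha, hk, Prod.ext_iff]
  · -- ψ j ∈ V maps into the z0 row
    have hjV : ψ j ∈ V := Submodule.subset_span ⟨j, hji, rfl⟩
    refine ⟨fun a => if a = z0 then 1 else 0, fun k => b.repr (ψ j) (z0, k), ?_⟩
    intro p
    dsimp only
    by_cases h1 : p.1 = z0
    · rw [if_pos h1, one_mul, ← h1]
    · rw [if_neg h1, zero_mul, b.repr_apply_apply]
      exact hkey p h1 _ hjV
end
end
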